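/- arXiv:1109.2557 — 6 statements merged into one kernel-verified Lean document; each statement's English description precedes it below -/
import Mathlib

section
/- Let C > 0. There exists a constant K > 0 depending only on C such that the following holds for every positive integer N, every s ∈ [t0, T*) with ϱ(s)+1 ≤ N, and every three times continuously differentiable function g : [T_{ℓ(s)}, T_{ϱ(s)+1}] → ℝ satisfying |g(u)| ≤ C, |g'(u)| ≤ C, |g''(u)| ≤ C, |g'''(u)| ≤ C on that interval. Set θ = (T_{ϱ(s)} − s)/Δ and β₁ = 5/12 + (5/12)θ + (1/6)θ², β₂ = 2/3 − (1/3)θ − (1/3)θ², β₃ = −1/12 − (1/12)θ + (1/6)θ². Then |∫_s^{T_{ℓ(s)}} g(u) du − (T_{ℓ(s)} − s)(β₁ g(T_{ℓ(s)}) + β₂ g(T_{ϱ(s)}) + β₃ g(T_{ϱ(s)+1}))| ≤ K Δ⁴, uniformly in s and Δ. -/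
/-- The maturity-time grid node `T_i = t0 + i·Δ` with `Δ = (T* − t0)/N`. -/
noncomputable def Tgrid (t0 Tstar : ℝ) (N i : ℕ) : ℝ := t0 + i * ((Tstar - t0) / N)

set_option maxHeartbeats 1000000

private lemma quad_aux (C : ℝ) (hC : 0 < C)
    (g : ℝ → ℝ) (a Δ s : ℝ) (hΔ : 0 < Δ) (hℓs : a ≤ s) (hsℓ : s < a + Δ)
    (hg : ContDiffOn ℝ 3 g (Set.Icc a (a + 2*Δ)))
    (hb : ∀ j : ℕ, j ≤ 3 → ∀ u ∈ Set.Icc a (a + 2*Δ),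
      |iteratedDerivWithin j g (Set.Icc a (a + 2*Δ)) u| ≤ C)
    (θ : ℝ) (hθdef : θ = (a + Δ - s) / Δ) :
    |(∫ u in s..a, g u) -
        (a - s) *
          ((5/12 + 5/12 * θ + 1/6 * θ^2) * g a +
           (2/3 - 1/3 * θ - 1/3 * θ^2) * g (a + Δ) +
           (-(1/12) - 1/12 * θ + 1/6 * θ^2) * g (a + 2*Δ))|
      ≤ 6 * C * Δ^4 := by
  have hΔne : Δ ≠ 0 := ne_of_gt hΔ
  have hab2 : a ≤ a + 2 * Δ := by linarith
  set I := Set.Icc a (a + 2*Δ) with hI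
  set c1 := iteratedDerivWithin 1 g I a with hc1
  set c2 := iteratedDerivWithin 2 g I a with hc2
  set P : ℝ → ℝ := fun x => g a + c1 * (x - a) + c2 * (x - a)^2 / 2 with hP
  -- Taylor remainder bound
  have taylor : ∀ x ∈ I, |g x - P x| ≤ C * (x - a)^3 / 2 := by
    intro x hx
    have h3 : ContDiffOn ℝ ((2:ℕ) + 1) g I := by exact_mod_cast hg
    have hCb : ∀ y ∈ I, ‖iteratedDerivWithin ((2:ℕ)+1) g I y‖ ≤ C := fun y hy => by
      rw [Real.norm_eq_abs]; exact hb 3 le_rfl y hy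
    have h := taylor_mean_remainder_bound hab2 h3 hx hCb
    have htay : taylorWithinEval g 2 I a x = P x := by
      rw [taylor_within_apply]
      simp [Finset.sum_range_succ, Nat.factorial, hP, smul_eq_mul]
      simp only [hc1, hc2, iteratedDerivWithin_one]
      ring
    rw [htay, Real.norm_eq_abs] at h
    norm_num [Nat.factorial] at h
    linarith
  -- integrability
  have hgc : ContinuousOn g I := hg.continuousOn
  have hIss : Set.uIcc a s ⊆ I := by
    rw [Set.uIcc_of_le hℓs]; exact Set.Icc_subset_Icc le_rfl (by linarith)
  have hgint : IntervalIntegrable g MeasureTheory.volume a s :=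
    (hgc.mono hIss).intervalIntegrable
  have hPc : Continuous P := by rw [hP]; continuity
  have hPint : IntervalIntegrable P MeasureTheory.volume a s := hPc.intervalIntegrable a s
  have hRint : IntervalIntegrable (fun u => g u - P u) MeasureTheory.volume a s :=
    hgint.sub hPint
  -- integral of P
  have hFder : ∀ x ∈ Set.uIcc a s,
      HasDerivAt (fun y => g a * (y - a) + c1 * (y - a)^2 / 2 + c2 * (y - a)^3 / 6) (P x) x := by
    intro x _
    have h1 : HasDerivAt (fun y : ℝ => y - a) 1 x := (hasDerivAt_id x).sub_const a
    have := (((h1.const_mul (g a))).add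
      (((h1.pow 2).const_mul c1).div_const 2)).add (((h1.pow 3).const_mul c2).div_const 6)
    convert this using 1
    · rfl
    · rfl
    · rfl
    simp [hP]; ring
  have hPval : (∫ u in a..s, P u)
      = g a * (s - a) + c1 * (s - a)^2 / 2 + c2 * (s - a)^3 / 6 := by
    rw [intervalIntegral.integral_eq_sub_of_hasDerivAt hFder (hPc.intervalIntegrable a s)]
    ring
  -- split
  have hsplit : (∫ u in s..a, g u)
      = -(∫ u in a..s, P u) - ∫ u in a..s, (g u - P u) := by
    rw [intervalIntegral.integral_symm a s]
    have h2 : (∫ u in a..s, g u) = (∫ u in a..s, P u) + ∫ u in a..s, (g u - P u) := by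
      have h0 := intervalIntegral.integral_add hPint hRint
      have h1 : (∫ u in a..s, (P u + (g u - P u))) = ∫ u in a..s, g u := by
        apply intervalIntegral.integral_congr; intro u _; ring
      rw [h1] at h0; exact h0
    rw [h2]; ring
  -- P at nodes
  have hPa1 : P (a + Δ) = g a + c1 * Δ + c2 * Δ^2 / 2 := by simp only [hP]; ring
  have hPa2 : P (a + 2*Δ) = g a + c1 * (2*Δ) + c2 * (2*Δ)^2 / 2 := by simp only [hP]; ring
  -- key algebraic identity
  have key : (∫ u in s..a, g u) -
        (a - s) *
          ((5/12 + 5/12 * θ + 1/6 * θ^2) * g a +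
           (2/3 - 1/3 * θ - 1/3 * θ^2) * g (a + Δ) +
           (-(1/12) - 1/12 * θ + 1/6 * θ^2) * g (a + 2*Δ))
      = -(∫ u in a..s, (g u - P u))
        + (s - a) * ((2/3 - 1/3 * θ - 1/3 * θ^2) * (g (a + Δ) - P (a + Δ))
            + (-(1/12) - 1/12 * θ + 1/6 * θ^2) * (g (a + 2*Δ) - P (a + 2*Δ))) := by
    have hθΔ : θ * Δ = a + Δ - s := by rw [hθdef]; field_simp
    rw [hsplit, hPval, hPa1, hPa2]
    linear_combination (-((s-a)*c1/2) - (s-a)*c2/6*(Δ*(1-θ)+(s-a))) * hθΔ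
  rw [key]
  -- bounds
  have hθ0 : 0 ≤ θ := by rw [hθdef]; apply div_nonneg (by linarith) (le_of_lt hΔ)
  have hθ1 : θ ≤ 1 := by rw [hθdef, div_le_one hΔ]; linarith
  have hb2 : |2/3 - 1/3 * θ - 1/3 * θ^2| ≤ 2/3 := by
    rw [abs_le]; constructor <;> nlinarith
  have hb3 : |-(1/12) - 1/12 * θ + 1/6 * θ^2| ≤ 1/3 := by
    rw [abs_le]; constructor <;> nlinarith
  have hr1 : |g (a + Δ) - P (a + Δ)| ≤ C * Δ^3 / 2 := by
    have := taylor (a + Δ) ⟨by linarith, by linarith⟩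
    calc |g (a+Δ) - P (a+Δ)| ≤ C * (a + Δ - a)^3/2 := this
      _ = C * Δ^3 / 2 := by ring_nf
  have hr2 : |g (a + 2*Δ) - P (a + 2*Δ)| ≤ 4 * C * Δ^3 := by
    have := taylor (a + 2*Δ) ⟨by linarith, le_rfl⟩
    calc |g (a+2*Δ) - P (a+2*Δ)| ≤ C * (a + 2*Δ - a)^3/2 := this
      _ = 4 * C * Δ^3 := by ring_nf
  have hsa : |s - a| ≤ Δ := by rw [abs_of_nonneg (by linarith)]; linarith
  have hJ : |∫ u in a..s, (g u - P u)| ≤ (C * Δ^3 / 2) * Δ := by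
    have h1 : ‖∫ u in a..s, (g u - P u)‖ ≤ (C * Δ^3 / 2) * |s - a| := by
      apply intervalIntegral.norm_integral_le_of_norm_le_const
      intro x hx
      rw [Set.uIoc_of_le hℓs] at hx
      have hxI : x ∈ I := ⟨le_of_lt hx.1, by linarith [hx.2]⟩
      rw [Real.norm_eq_abs]
      have h2 := taylor x hxI
      have h3 : (x - a)^3 ≤ Δ^3 := pow_le_pow_left₀ (by linarith [hx.1]) (by linarith [hx.2]) 3
      nlinarith
    rw [Real.norm_eq_abs] at h1
    calc |∫ u in a..s, (g u - P u)| ≤ (C * Δ^3 / 2) * |s - a| := h1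
      _ ≤ (C * Δ^3 / 2) * Δ := by
          apply mul_le_mul_of_nonneg_left hsa; positivity
  have e1 : |(2/3 - 1/3 * θ - 1/3 * θ^2) * (g (a + Δ) - P (a + Δ))| ≤ 2/3 * (C * Δ^3 / 2) := by
    rw [abs_mul]; exact mul_le_mul hb2 hr1 (abs_nonneg _) (by norm_num)
  have e2 : |(-(1/12) - 1/12 * θ + 1/6 * θ^2) * (g (a + 2*Δ) - P (a + 2*Δ))|
      ≤ 1/3 * (4 * C * Δ^3) := by
    rw [abs_mul]; exact mul_le_mul hb3 hr2 (abs_nonneg _) (by norm_num)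
  have e3 : |(s - a) * ((2/3 - 1/3 * θ - 1/3 * θ^2) * (g (a + Δ) - P (a + Δ))
      + (-(1/12) - 1/12 * θ + 1/6 * θ^2) * (g (a + 2*Δ) - P (a + 2*Δ)))|
      ≤ Δ * (2/3 * (C * Δ^3 / 2) + 1/3 * (4 * C * Δ^3)) := by
    rw [abs_mul]
    exact mul_le_mul hsa (le_trans (abs_add_le _ _) (add_le_add e1 e2)) (abs_nonneg _)
      (le_of_lt hΔ)
  calc |(-(∫ u in a..s, (g u - P u)))
        + (s - a) * ((2/3 - 1/3 * θ - 1/3 * θ^2) * (g (a + Δ) - P (a + Δ))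
            + (-(1/12) - 1/12 * θ + 1/6 * θ^2) * (g (a + 2*Δ) - P (a + 2*Δ)))|
      ≤ |(-(∫ u in a..s, (g u - P u)))|
        + |(s - a) * ((2/3 - 1/3 * θ - 1/3 * θ^2) * (g (a + Δ) - P (a + Δ))
            + (-(1/12) - 1/12 * θ + 1/6 * θ^2) * (g (a + 2*Δ) - P (a + 2*Δ)))| := abs_add_le _ _
    _ ≤ (C * Δ^3 / 2) * Δ + Δ * (2/3 * (C * Δ^3 / 2) + 1/3 * (4 * C * Δ^3)) := by
        rw [abs_neg]; exact add_le_add hJ e3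
    _ ≤ 6 * C * Δ^4 := by nlinarith [mul_pos hC (pow_pos hΔ 4)]

/-- Order-four error bound, uniform in `s` and `Δ`, for the three-node quadrature rule
with target node `T_{ℓ(s)}` and weights
`β₁ = 5/12 + (5/12)θ + (1/6)θ²`, `β₂ = 2/3 − (1/3)θ − (1/3)θ²`,
`β₃ = −1/12 − (1/12)θ + (1/6)θ²`, where `θ = (T_{ϱ(s)} − s)/Δ`. -/
theorem quadrature_left_node_order_four (C : ℝ) (hC : 0 < C) :
    ∃ K > 0, ∀ (t0 Tstar : ℝ), t0 < Tstar → ∀ N : ℕ, 0 < N →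
      ∀ s : ℝ, t0 ≤ s → s < Tstar →
      ∀ ℓ : ℕ, Tgrid t0 Tstar N ℓ ≤ s → s < Tgrid t0 Tstar N (ℓ + 1) → ℓ + 2 ≤ N →
      ∀ g : ℝ → ℝ,
        ContDiffOn ℝ 3 g (Set.Icc (Tgrid t0 Tstar N ℓ) (Tgrid t0 Tstar N (ℓ + 2))) →
        (∀ j : ℕ, j ≤ 3 →
          ∀ u ∈ Set.Icc (Tgrid t0 Tstar N ℓ) (Tgrid t0 Tstar N (ℓ + 2)),
            |iteratedDerivWithin j g
                (Set.Icc (Tgrid t0 Tstar N ℓ) (Tgrid t0 Tstar N (ℓ + 2))) u| ≤ C) →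
        let Δ : ℝ := (Tstar - t0) / N
        let θ : ℝ := (Tgrid t0 Tstar N (ℓ + 1) - s) / Δ
        |(∫ u in s..(Tgrid t0 Tstar N ℓ), g u) -
            (Tgrid t0 Tstar N ℓ - s) *
              ((5/12 + 5/12 * θ + 1/6 * θ^2) * g (Tgrid t0 Tstar N ℓ) +
               (2/3 - 1/3 * θ - 1/3 * θ^2) * g (Tgrid t0 Tstar N (ℓ + 1)) +
               (-(1/12) - 1/12 * θ + 1/6 * θ^2) * g (Tgrid t0 Tstar N (ℓ + 2)))|
          ≤ K * Δ^4 := by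
  refine ⟨6 * C, by positivity, ?_⟩
  intro t0 Tstar hts N hN s hs0 hs1 ℓ hℓs hsℓ hℓN g hg hb Δ θ
  have hΔdef : Δ = (Tstar - t0) / N := rfl
  have hNpos : (0:ℝ) < N := by exact_mod_cast hN
  have hΔ : 0 < Δ := by rw [hΔdef]; exact div_pos (by linarith) hNpos
  set a := Tgrid t0 Tstar N ℓ with ha
  have hT1 : Tgrid t0 Tstar N (ℓ + 1) = a + Δ := by
    simp only [ha, Tgrid, hΔdef]; push_cast; ring
  have hT2 : Tgrid t0 Tstar N (ℓ + 2) = a + 2 * Δ := by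
    simp only [ha, Tgrid, hΔdef]; push_cast; ring
  have hθdef : θ = (a + Δ - s) / Δ := by rw [← hT1]
  rw [hT1] at hsℓ
  rw [hT2] at hg hb
  rw [hT1, hT2]
  exact quad_aux C hC g a Δ s hΔ hℓs hsℓ hg hb θ hθdef
end

section
/- Let C > 0. There exists a constant K > 0 depending only on C such that the following holds for every positive integer N, every s ∈ [t0, T*) with ϱ(s)+1 ≤ N, and every three times continuously differentiable function g : [T_{ℓ(s)}, T_{ϱ(s)+1}] → ℝ satisfying |g(u)| ≤ C, |g'(u)| ≤ C, |g''(u)| ≤ C, |g'''(u)| ≤ C on that interval. Set θ = (T_{ϱ(s)} − s)/Δ and β₁ = (1/4)θ + (1/6)θ², β₂ = 1 − (1/3)θ², β₃ = −(1/4)θ + (1/6)θ². Then |∫_s^{T_{ϱ(s)}} g(u) du − (T_{ϱ(s)} − s)(β₁ g(T_{ℓ(s)}) + β₂ g(T_{ϱ(s)}) + β₃ g(T_{ϱ(s)+1}))| ≤ K Δ⁴, uniformly in s and Δ. -/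
set_option maxHeartbeats 1000000


lemma quad_exact' (c s Δ d0 d1 d2 : ℝ) (hΔ : Δ ≠ 0) :
    (d0*(c+Δ-c)+d1*(c+Δ-c)^2/2+d2*(c+Δ-c)^3/6) - (d0*(s-c)+d1*(s-c)^2/2+d2*(s-c)^3/6)
      = (c+Δ-s) *
        ((1/4 * ((c+Δ-s)/Δ) + 1/6 * ((c+Δ-s)/Δ)^2) * d0 +
         (1 - 1/3 * ((c+Δ-s)/Δ)^2) * (d0 + d1*(c+Δ-c) + d2/2*(c+Δ-c)^2) +
         (-(1/4) * ((c+Δ-s)/Δ) + 1/6 * ((c+Δ-s)/Δ)^2) * (d0 + d1*(c+2*Δ-c) + d2/2*(c+2*Δ-c)^2)) := by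
  field_simp
  ring

lemma quadrature_aux (C : ℝ) (hC : 0 < C) (c Δ s : ℝ) (hΔ : 0 < Δ)
    (hls : c ≤ s) (hsl : s < c + Δ) (g : ℝ → ℝ)
    (hg : ContDiffOn ℝ 3 g (Set.Icc c (c + 2 * Δ)))
    (hbound : ∀ j : ℕ, j ≤ 3 → ∀ u ∈ Set.Icc c (c + 2 * Δ),
      |iteratedDerivWithin j g (Set.Icc c (c + 2 * Δ)) u| ≤ C) :
    |(∫ u in s..(c + Δ), g u) -
        (c + Δ - s) *
          ((1/4 * ((c + Δ - s)/Δ) + 1/6 * ((c + Δ - s)/Δ)^2) * g c +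
           (1 - 1/3 * ((c + Δ - s)/Δ)^2) * g (c + Δ) +
           (-(1/4) * ((c + Δ - s)/Δ) + 1/6 * ((c + Δ - s)/Δ)^2) * g (c + 2 * Δ))|
      ≤ 5 * C * Δ^4 := by
  set θ : ℝ := (c + Δ - s) / Δ with hθ
  set I : Set ℝ := Set.Icc c (c + 2 * Δ) with hI
  have hcb : c ≤ c + 2 * Δ := by linarith
  have hsa : s ≤ c + Δ := le_of_lt hsl
  have haI : c + Δ ∈ I := ⟨by linarith, by linarith⟩
  have hbI : c + 2 * Δ ∈ I := ⟨by linarith, le_refl _⟩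
  set d1 : ℝ := iteratedDerivWithin 1 g I c with hd1
  set d2 : ℝ := iteratedDerivWithin 2 g I c with hd2
  set P : ℝ → ℝ := fun u => g c + d1 * (u - c) + d2 / 2 * (u - c) ^ 2 with hP
  have hg3 : ContDiffOn ℝ ((2:ℕ) + 1) g I := by exact_mod_cast hg
  have hR : ∀ u ∈ I, |g u - P u| ≤ C * (u - c) ^ 3 / 2 := by
    intro u hu
    have hC3 : ∀ y ∈ I, ‖iteratedDerivWithin ((2:ℕ) + 1) g I y‖ ≤ C := by
      intro y hy
      simpa using hbound 3 (by norm_num) y hy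
    have h := taylor_mean_remainder_bound (f := g) (n := 2) hcb hg3 hu hC3
    have hTay : taylorWithinEval g 2 I c u = P u := by
      rw [taylor_within_apply]
      simp [Finset.sum_range_succ, hP]
      rw [hd1, hd2, iteratedDerivWithin_one]
      ring
    rw [hTay] at h
    simpa [Nat.factorial] using h
  have hgcont : ContinuousOn g I := hg.continuousOn
  have huIcc : Set.uIcc s (c + Δ) ⊆ I := by
    rw [Set.uIcc_of_le hsa]
    exact Set.Icc_subset_Icc hls (by linarith)
  have hintg : IntervalIntegrable g MeasureTheory.volume s (c + Δ) :=
    (hgcont.mono huIcc).intervalIntegrable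
  have hPcont : Continuous P := by fun_prop
  have hintP : IntervalIntegrable P MeasureTheory.volume s (c + Δ) :=
    hPcont.intervalIntegrable _ _
  set Q : ℝ → ℝ := fun u => g c * (u - c) + d1 * (u - c) ^ 2 / 2 + d2 * (u - c) ^ 3 / 6 with hQ
  have hQderiv : ∀ u : ℝ, HasDerivAt Q (P u) u := by
    intro u
    have h1 : HasDerivAt (fun x : ℝ => x - c) 1 u := (hasDerivAt_id u).sub_const c
    have h := ((h1.const_mul (g c)).add (((h1.pow 2).const_mul d1).div_const 2)).add
      (((h1.pow 3).const_mul d2).div_const 6)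
    have hQe : Q = ((fun y => g c * (y - c)) + fun x => d1 * ((fun x => x - c) ^ 2) x / 2) +
        fun x => d2 * ((fun x => x - c) ^ 3) x / 6 := rfl
    rw [hQe]
    refine h.congr_deriv ?_
    simp [hP]
    ring
  have hFTC : (∫ u in s..(c + Δ), P u) = Q (c + Δ) - Q s :=
    intervalIntegral.integral_eq_sub_of_hasDerivAt (fun u _ => hQderiv u)
      (hPcont.intervalIntegrable _ _)
  have hsplit : (∫ u in s..(c + Δ), g u)
      = (∫ u in s..(c + Δ), (g u - P u)) + (Q (c + Δ) - Q s) := by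
    rw [intervalIntegral.integral_sub hintg hintP, hFTC]; ring
  have hquad : Q (c + Δ) - Q s = (c + Δ - s) *
        ((1/4 * θ + 1/6 * θ^2) * P c +
         (1 - 1/3 * θ^2) * P (c + Δ) +
         (-(1/4) * θ + 1/6 * θ^2) * P (c + 2 * Δ)) := by
    rw [hθ]
    simpa [hQ, hP] using quad_exact' c s Δ (g c) d1 d2 (ne_of_gt hΔ)
  have hkey : (∫ u in s..(c + Δ), g u) - (c + Δ - s) *
        ((1/4 * θ + 1/6 * θ^2) * g c +
         (1 - 1/3 * θ^2) * g (c + Δ) +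
         (-(1/4) * θ + 1/6 * θ^2) * g (c + 2 * Δ))
      = (∫ u in s..(c + Δ), (g u - P u)) - (c + Δ - s) *
        ((1/4 * θ + 1/6 * θ^2) * (g c - P c) +
         (1 - 1/3 * θ^2) * (g (c + Δ) - P (c + Δ)) +
         (-(1/4) * θ + 1/6 * θ^2) * (g (c + 2 * Δ) - P (c + 2 * Δ))) := by
    rw [hsplit]
    linear_combination hquad
  rw [hkey]
  have hθ0 : 0 ≤ θ := div_nonneg (by linarith) hΔ.le
  have hθ1 : θ ≤ 1 := by
    rw [hθ, div_le_one hΔ]; linarith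
  have hRc : g c - P c = 0 := by simp [hP]
  have hRa : |g (c + Δ) - P (c + Δ)| ≤ C * Δ ^ 3 / 2 := by
    have h := hR _ haI
    simpa using h
  have hRb : |g (c + 2 * Δ) - P (c + 2 * Δ)| ≤ 4 * C * Δ ^ 3 := by
    have h := hR _ hbI
    calc |g (c + 2 * Δ) - P (c + 2 * Δ)| ≤ C * (c + 2 * Δ - c) ^ 3 / 2 := h
      _ = 4 * C * Δ ^ 3 := by ring
  have hIbound : |∫ u in s..(c + Δ), (g u - P u)| ≤ C * Δ ^ 3 / 2 * Δ := by
    have h1 : ∀ u ∈ Set.uIoc s (c + Δ), ‖g u - P u‖ ≤ C * Δ ^ 3 / 2 := by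
      intro u hu
      rw [Set.uIoc_of_le hsa] at hu
      have huI : u ∈ I := ⟨le_trans hls (le_of_lt hu.1), by linarith [hu.2]⟩
      have h2 := hR u huI
      have hmono : C * (u - c) ^ 3 / 2 ≤ C * Δ ^ 3 / 2 := by
        have h0 : 0 ≤ u - c := by linarith [huI.1]
        have h3 : u - c ≤ Δ := by linarith [hu.2]
        gcongr
      exact le_trans h2 hmono
    have h4 := intervalIntegral.norm_integral_le_of_norm_le_const h1
    rw [abs_of_nonneg (by linarith : (0:ℝ) ≤ c + Δ - s)] at h4
    calc |∫ u in s..(c + Δ), (g u - P u)| ≤ C * Δ ^ 3 / 2 * (c + Δ - s) := h4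
      _ ≤ C * Δ ^ 3 / 2 * Δ := by
          have : (0:ℝ) ≤ C * Δ ^ 3 / 2 := by positivity
          nlinarith
  have hb2 : |1 - 1/3 * θ^2| ≤ 1 := by
    rw [abs_le]; constructor <;> nlinarith
  have hb3 : |(-(1/4)) * θ + 1/6 * θ^2| ≤ 1 := by
    rw [abs_le]; constructor <;> nlinarith
  have has' : 0 ≤ c + Δ - s := by linarith
  have hasΔ : c + Δ - s ≤ Δ := by linarith
  set A := ∫ u in s..(c + Δ), (g u - P u) with hA
  set B := (1/4 * θ + 1/6 * θ^2) * (g c - P c) +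
         (1 - 1/3 * θ^2) * (g (c + Δ) - P (c + Δ)) +
         (-(1/4) * θ + 1/6 * θ^2) * (g (c + 2 * Δ) - P (c + 2 * Δ)) with hB
  have hBbound : |B| ≤ C * Δ ^ 3 / 2 + 4 * C * Δ ^ 3 := by
    rw [hB, hRc, mul_zero, zero_add]
    calc |(1 - 1/3 * θ^2) * (g (c + Δ) - P (c + Δ)) +
         (-(1/4) * θ + 1/6 * θ^2) * (g (c + 2 * Δ) - P (c + 2 * Δ))|
        ≤ |(1 - 1/3 * θ^2) * (g (c + Δ) - P (c + Δ))| +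
          |(-(1/4) * θ + 1/6 * θ^2) * (g (c + 2 * Δ) - P (c + 2 * Δ))| := abs_add_le _ _
      _ ≤ 1 * (C * Δ ^ 3 / 2) + 1 * (4 * C * Δ ^ 3) := by
          rw [abs_mul, abs_mul]
          exact add_le_add (mul_le_mul hb2 hRa (abs_nonneg _) zero_le_one)
            (mul_le_mul hb3 hRb (abs_nonneg _) zero_le_one)
      _ = C * Δ ^ 3 / 2 + 4 * C * Δ ^ 3 := by ring
  calc |A - (c + Δ - s) * B| ≤ |A| + |(c + Δ - s) * B| := abs_sub _ _
    _ ≤ C * Δ ^ 3 / 2 * Δ + Δ * (C * Δ ^ 3 / 2 + 4 * C * Δ ^ 3) := by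
        rw [abs_mul, abs_of_nonneg has']
        exact add_le_add hIbound
          (mul_le_mul hasΔ hBbound (abs_nonneg _) hΔ.le)
    _ = 5 * C * Δ ^ 4 := by ring

/-- Order-four error bound, uniform in `s` and `Δ`, for the three-node quadrature rule
with target node `T_{ϱ(s)}` and weights
`β₁ = (1/4)θ + (1/6)θ²`, `β₂ = 1 − (1/3)θ²`, `β₃ = −(1/4)θ + (1/6)θ²`,
where `θ = (T_{ϱ(s)} − s)/Δ`. -/
theorem quadrature_middle_node_order_four (C : ℝ) (hC : 0 < C) :
    ∃ K > 0, ∀ (t0 Tstar : ℝ), t0 < Tstar → ∀ N : ℕ, 0 < N →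
      ∀ s : ℝ, t0 ≤ s → s < Tstar →
      ∀ ℓ : ℕ, Tgrid t0 Tstar N ℓ ≤ s → s < Tgrid t0 Tstar N (ℓ + 1) → ℓ + 2 ≤ N →
      ∀ g : ℝ → ℝ,
        ContDiffOn ℝ 3 g (Set.Icc (Tgrid t0 Tstar N ℓ) (Tgrid t0 Tstar N (ℓ + 2))) →
        (∀ j : ℕ, j ≤ 3 →
          ∀ u ∈ Set.Icc (Tgrid t0 Tstar N ℓ) (Tgrid t0 Tstar N (ℓ + 2)),
            |iteratedDerivWithin j g
                (Set.Icc (Tgrid t0 Tstar N ℓ) (Tgrid t0 Tstar N (ℓ + 2))) u| ≤ C) →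
        let Δ : ℝ := (Tstar - t0) / N
        let θ : ℝ := (Tgrid t0 Tstar N (ℓ + 1) - s) / Δ
        |(∫ u in s..(Tgrid t0 Tstar N (ℓ + 1)), g u) -
            (Tgrid t0 Tstar N (ℓ + 1) - s) *
              ((1/4 * θ + 1/6 * θ^2) * g (Tgrid t0 Tstar N ℓ) +
               (1 - 1/3 * θ^2) * g (Tgrid t0 Tstar N (ℓ + 1)) +
               (-(1/4) * θ + 1/6 * θ^2) * g (Tgrid t0 Tstar N (ℓ + 2)))|
          ≤ K * Δ^4 := by
  refine ⟨5 * C, by linarith, ?_⟩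
  intro t0 Tstar hts N hN s hs0 hsT ℓ hls hsl hlN g hg hbound Δ θ
  have hΔdef : Δ = (Tstar - t0) / (N : ℝ) := rfl
  have hθdef : θ = (Tgrid t0 Tstar N (ℓ + 1) - s) / Δ := rfl
  have hΔ : 0 < Δ := by
    rw [hΔdef]
    have hN' : (0:ℝ) < N := by exact_mod_cast hN
    exact div_pos (by linarith) hN'
  have ha1 : Tgrid t0 Tstar N (ℓ + 1) = Tgrid t0 Tstar N ℓ + Δ := by
    rw [hΔdef]; simp only [Tgrid]; push_cast; ring
  have ha2 : Tgrid t0 Tstar N (ℓ + 2) = Tgrid t0 Tstar N ℓ + 2 * Δ := by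
    rw [hΔdef]; simp only [Tgrid]; push_cast; ring
  rw [ha1] at hsl
  rw [ha2] at hg hbound
  rw [hθdef, ha1, ha2]
  exact quadrature_aux C hC (Tgrid t0 Tstar N ℓ) Δ s hΔ hls hsl g hg hbound
end

section
/- Let C > 0. There exists a constant K > 0 depending only on C such that the following holds for every positive integer N, every s ∈ [t0, T*) with ϱ(s)+1 ≤ N, and every three times continuously differentiable function g : [T_{ℓ(s)}, T_{ϱ(s)+1}] → ℝ satisfying |g(u)| ≤ C, |g'(u)| ≤ C, |g''(u)| ≤ C, |g'''(u)| ≤ C on that interval. Set θ = (T_{ϱ(s)} − s)/Δ and β₁ = −1/12 + (1/12)θ + (1/6)θ², β₂ = 2/3 + (1/3)θ − (1/3)θ², β₃ = 5/12 − (5/12)θ + (1/6)θ². Then |∫_s^{T_{ϱ(s)+1}} g(u) du − (T_{ϱ(s)+1} − s)(β₁ g(T_{ℓ(s)}) + β₂ g(T_{ϱ(s)}) + β₃ g(T_{ϱ(s)+1}))| ≤ K Δ⁴, uniformly in s and Δ. -/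
set_option maxHeartbeats 4000000


lemma quad_exact (a d s c0 c1 c2 : ℝ) (hd : d ≠ 0) :
    (c0*(a+2*d-a) + c1/2*(a+2*d-a)^2 + c2/6*(a+2*d-a)^3)
      - (c0*(s-a) + c1/2*(s-a)^2 + c2/6*(s-a)^3)
    = (a + 2*d - s) *
      ((-(1/12) + 1/12*((a+d-s)/d) + 1/6*((a+d-s)/d)^2) * (c0 + c1*(a-a) + c2/2*(a-a)^2) +
       (2/3 + 1/3*((a+d-s)/d) - 1/3*((a+d-s)/d)^2) * (c0 + c1*(a+d-a) + c2/2*(a+d-a)^2) +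
       (5/12 - 5/12*((a+d-s)/d) + 1/6*((a+d-s)/d)^2) * (c0 + c1*(a+2*d-a) + c2/2*(a+2*d-a)^2)) := by
  field_simp
  ring

/-- Order-four error bound, uniform in `s` and `Δ`, for the three-node quadrature rule
with target node `T_{ϱ(s)+1}` and weights
`β₁ = −1/12 + (1/12)θ + (1/6)θ²`, `β₂ = 2/3 + (1/3)θ − (1/3)θ²`,
`β₃ = 5/12 − (5/12)θ + (1/6)θ²`, where `θ = (T_{ϱ(s)} − s)/Δ`. -/
theorem quadrature_right_node_order_four (C : ℝ) (hC : 0 < C) :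
    ∃ K > 0, ∀ (t0 Tstar : ℝ), t0 < Tstar → ∀ N : ℕ, 0 < N →
      ∀ s : ℝ, t0 ≤ s → s < Tstar →
      ∀ ℓ : ℕ, Tgrid t0 Tstar N ℓ ≤ s → s < Tgrid t0 Tstar N (ℓ + 1) → ℓ + 2 ≤ N →
      ∀ g : ℝ → ℝ,
        ContDiffOn ℝ 3 g (Set.Icc (Tgrid t0 Tstar N ℓ) (Tgrid t0 Tstar N (ℓ + 2))) →
        (∀ j : ℕ, j ≤ 3 →
          ∀ u ∈ Set.Icc (Tgrid t0 Tstar N ℓ) (Tgrid t0 Tstar N (ℓ + 2)),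
            |iteratedDerivWithin j g
                (Set.Icc (Tgrid t0 Tstar N ℓ) (Tgrid t0 Tstar N (ℓ + 2))) u| ≤ C) →
        let Δ : ℝ := (Tstar - t0) / N
        let θ : ℝ := (Tgrid t0 Tstar N (ℓ + 1) - s) / Δ
        |(∫ u in s..(Tgrid t0 Tstar N (ℓ + 2)), g u) -
            (Tgrid t0 Tstar N (ℓ + 2) - s) *
              ((-(1/12) + 1/12 * θ + 1/6 * θ^2) * g (Tgrid t0 Tstar N ℓ) +
               (2/3 + 1/3 * θ - 1/3 * θ^2) * g (Tgrid t0 Tstar N (ℓ + 1)) +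
               (5/12 - 5/12 * θ + 1/6 * θ^2) * g (Tgrid t0 Tstar N (ℓ + 2)))|
          ≤ K * Δ^4 := by
  refine ⟨32 * C, by positivity, ?_⟩
  intro t0 Tstar hts N hN s hs0 hsT ℓ hℓs hsℓ hℓN g hg hbd Δ θ
  set a := Tgrid t0 Tstar N ℓ with hadef
  set m := Tgrid t0 Tstar N (ℓ + 1) with hmdef
  set b := Tgrid t0 Tstar N (ℓ + 2) with hbdef
  have hΔdef : Δ = (Tstar - t0) / N := rfl
  have hθdef : θ = (m - s) / Δ := rfl
  have hΔ : (0:ℝ) < Δ := by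
    rw [hΔdef]
    apply div_pos (by linarith) (by exact_mod_cast hN)
  have hma : m = a + Δ := by
    rw [hmdef, hadef, hΔdef]; unfold Tgrid; push_cast; ring
  have hba : b = a + 2 * Δ := by
    rw [hbdef, hadef, hΔdef]; unfold Tgrid; push_cast; ring
  have hab : a ≤ b := by rw [hba]; linarith
  have hsb : s < b := by rw [hba]; rw [hma] at hsℓ; linarith
  have hθ0 : 0 ≤ θ := by
    rw [hθdef]
    apply div_nonneg _ hΔ.le
    linarith [hsℓ]
  have hθ1 : θ ≤ 1 := by
    rw [hθdef, div_le_one hΔ, hma]; linarith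
  clear_value a m b Δ θ
  have hg3 : ContDiffOn ℝ ((2:ℕ)+1) g (Set.Icc a b) := by exact_mod_cast hg
  -- Taylor polynomial
  set c1 := iteratedDerivWithin 1 g (Set.Icc a b) a with hc1
  set c2 := iteratedDerivWithin 2 g (Set.Icc a b) a with hc2
  set P : ℝ → ℝ := fun x => g a + c1 * (x - a) + c2/2 * (x - a)^2 with hP
  have hTP : ∀ x : ℝ, taylorWithinEval g 2 (Set.Icc a b) a x = P x := by
    intro x
    rw [taylor_within_apply]
    simp [Finset.sum_range_succ, Nat.factorial, hP]
    rw [hc1, hc2, iteratedDerivWithin_one]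
    ring
  have hM : ∀ x ∈ Set.Icc a b, |g x - P x| ≤ 4 * C * Δ^3 := by
    intro x hx
    have h3 : ∀ y ∈ Set.Icc a b, ‖iteratedDerivWithin ((2:ℕ)+1) g (Set.Icc a b) y‖ ≤ C := by
      intro y hy
      simpa [Real.norm_eq_abs] using hbd 3 le_rfl y hy
    have := taylor_mean_remainder_bound hab hg3 hx h3
    rw [hTP, Real.norm_eq_abs] at this
    have hxa3 : (x - a)^3 ≤ 8 * Δ^3 := by
      have h1 : x - a ≤ 2 * Δ := by
        have := hx.2; rw [hba] at this; linarith
      have h2 : (0:ℝ) ≤ x - a := by linarith [hx.1]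
      calc (x - a)^3 ≤ (2*Δ)^3 := by
            exact pow_le_pow_left₀ h2 h1 3
        _ = 8 * Δ^3 := by ring
    refine this.trans ?_
    have hfac : C * (x - a) ^ (2 + 1) / ((Nat.factorial 2 : ℕ) : ℝ) = C * (x - a)^3 / 2 := by
      norm_num [Nat.factorial]
    rw [hfac]
    nlinarith [mul_le_mul_of_nonneg_left hxa3 hC.le]
  -- integrability
  have hsubIcc : Set.uIcc s b ⊆ Set.Icc a b := by
    rw [Set.uIcc_of_le hsb.le]
    exact Set.Icc_subset_Icc hℓs (le_refl b)
  have hgi : IntervalIntegrable g MeasureTheory.volume s b :=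
    (hg.continuousOn.mono hsubIcc).intervalIntegrable
  have hPc : Continuous P := by
    rw [hP]; fun_prop
  have hPi : IntervalIntegrable P MeasureTheory.volume s b :=
    hPc.intervalIntegrable s b
  -- integral of P
  set F : ℝ → ℝ := fun x => g a * (x - a) + c1/2 * (x - a)^2 + c2/6 * (x - a)^3 with hF
  have hFd : ∀ x : ℝ, HasDerivAt F (P x) x := by
    intro x
    have h1 : HasDerivAt (fun u : ℝ => u - a) 1 x := (hasDerivAt_id x).sub_const a
    have h2 := h1.pow 2
    have h3 := h1.pow 3
    have h := ((h1.const_mul (g a)).add (h2.const_mul (c1/2))).add (h3.const_mul (c2/6))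
    exact h.congr_deriv (by simp only [hP]; push_cast; ring)
  have hintP : (∫ u in s..b, P u) = F b - F s :=
    intervalIntegral.integral_eq_sub_of_hasDerivAt (fun x _ => hFd x) hPi
  set B1 : ℝ := -(1/12) + 1/12 * θ + 1/6 * θ^2 with hB1
  set B2 : ℝ := 2/3 + 1/3 * θ - 1/3 * θ^2 with hB2
  set B3 : ℝ := 5/12 - 5/12 * θ + 1/6 * θ^2 with hB3
  have hexact : F b - F s = (b - s) * (B1 * P a + B2 * P m + B3 * P b) := by
    have h := quad_exact a Δ s (g a) c1 c2 hΔ.ne'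
    rw [hF, hP, hB1, hB2, hB3, hθdef, hma, hba]
    simpa using h
  have key : (∫ u in s..b, g u) - (b - s) * (B1 * g a + B2 * g m + B3 * g b)
      = (∫ u in s..b, (g u - P u))
        - (b - s) * (B1 * (g a - P a) + B2 * (g m - P m) + B3 * (g b - P b)) := by
    rw [intervalIntegral.integral_sub hgi hPi, hintP, hexact]
    ring
  rw [key]
  -- bounds
  have hBa1 : |B1| ≤ 1/3 := abs_le.mpr ⟨by rw [hB1]; nlinarith, by rw [hB1]; nlinarith⟩
  have hBa2 : |B2| ≤ 4/3 := abs_le.mpr ⟨by rw [hB2]; nlinarith, by rw [hB2]; nlinarith⟩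
  have hθθ : θ^2 ≤ 1 := pow_le_one₀ hθ0 hθ1
  have hBa3 : |B3| ≤ 1 := abs_le.mpr ⟨by rw [hB3]; nlinarith, by rw [hB3]; nlinarith⟩
  have haI : a ∈ Set.Icc a b := Set.left_mem_Icc.mpr hab
  have ham : a ≤ m := by linarith only [hma, hΔ]
  have hmb : m ≤ b := by linarith only [hma, hba, hΔ]
  have hmI : m ∈ Set.Icc a b := Set.mem_Icc.mpr ⟨ham, hmb⟩
  have hbI : b ∈ Set.Icc a b := Set.right_mem_Icc.mpr hab
  have hbs : b - s ≤ 2 * Δ := by linarith only [hba, hℓs]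
  have hbs0 : 0 ≤ b - s := by linarith only [hsb]
  have hint_bd : |∫ u in s..b, (g u - P u)| ≤ (4 * C * Δ^3) * (2 * Δ) := by
    have h := intervalIntegral.norm_integral_le_of_norm_le_const
      (C := 4 * C * Δ^3) (f := fun u => g u - P u) (a := s) (b := b) ?_
    · rw [Real.norm_eq_abs] at h
      calc |∫ u in s..b, (g u - P u)| ≤ 4 * C * Δ^3 * |b - s| := h
        _ ≤ (4 * C * Δ^3) * (2 * Δ) := by
            apply mul_le_mul_of_nonneg_left _ (by positivity)
            rw [abs_of_nonneg hbs0]; exact hbs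
    · intro x hx
      rw [Set.uIoc_of_le hsb.le] at hx
      exact (Real.norm_eq_abs _) ▸ hM x ⟨le_trans hℓs hx.1.le, hx.2⟩
  have hg_bd : |B1 * (g a - P a) + B2 * (g m - P m) + B3 * (g b - P b)|
      ≤ (8/3) * (4 * C * Δ^3) := by
    have h1 := hM a haI
    have h2 := hM m hmI
    have h3 := hM b hbI
    have e1 : |B1 * (g a - P a)| ≤ (1/3) * (4 * C * Δ^3) := by
      rw [abs_mul]; exact mul_le_mul hBa1 h1 (abs_nonneg _) (by norm_num)
    have e2 : |B2 * (g m - P m)| ≤ (4/3) * (4 * C * Δ^3) := by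
      rw [abs_mul]; exact mul_le_mul hBa2 h2 (abs_nonneg _) (by norm_num)
    have e3 : |B3 * (g b - P b)| ≤ 1 * (4 * C * Δ^3) := by
      rw [abs_mul]; exact mul_le_mul hBa3 h3 (abs_nonneg _) (by norm_num)
    calc |B1 * (g a - P a) + B2 * (g m - P m) + B3 * (g b - P b)|
        ≤ |B1 * (g a - P a)| + |B2 * (g m - P m)| + |B3 * (g b - P b)| := by
          exact (abs_add_le _ _).trans (by gcongr; exact abs_add_le _ _)
      _ ≤ (1/3) * (4 * C * Δ^3) + (4/3) * (4 * C * Δ^3) + 1 * (4 * C * Δ^3) := by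
          linarith only [e1, e2, e3]
      _ = (8/3) * (4 * C * Δ^3) := by ring
  calc |(∫ u in s..b, (g u - P u))
        - (b - s) * (B1 * (g a - P a) + B2 * (g m - P m) + B3 * (g b - P b))|
      ≤ |∫ u in s..b, (g u - P u)|
        + |(b - s) * (B1 * (g a - P a) + B2 * (g m - P m) + B3 * (g b - P b))| :=
        abs_sub _ _
    _ ≤ (4 * C * Δ^3) * (2 * Δ) + (2 * Δ) * ((8/3) * (4 * C * Δ^3)) := by
        have : |(b - s) * (B1 * (g a - P a) + B2 * (g m - P m) + B3 * (g b - P b))|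
            ≤ (2 * Δ) * ((8/3) * (4 * C * Δ^3)) := by
          rw [abs_mul, abs_of_nonneg hbs0]
          exact mul_le_mul hbs hg_bd (abs_nonneg _) (by positivity)
        linarith only [hint_bd, this]
    _ ≤ 32 * C * Δ^4 := by
        have he : (4 * C * Δ^3) * (2 * Δ) + (2 * Δ) * ((8/3) * (4 * C * Δ^3))
            = (88/3) * (C * Δ^4) := by ring
        have h4 : 0 ≤ C * Δ^4 := by positivity
        rw [he]
        linarith only [h4]
end

section
/- Let C > 0. There exists a constant K > 0 depending only on C and T* − t0 such that the following holds for every positive integer N, every s ∈ [t0, T*), every index i with ϱ(s) + 2 ≤ i ≤ N, and every four times continuously differentiable function g : [T_{ℓ(s)}, T_i] → ℝ whose derivatives up to order four are bounded in absolute value by C. Define the quadrature S as the sum of: (a) the partial-interval three-node rule (T_{ϱ(s)} − s)(β₁ g(T_{ℓ(s)}) + β₂ g(T_{ϱ(s)}) + β₃ g(T_{ϱ(s)+1})) with θ = (T_{ϱ(s)} − s)/Δ, β₁ = (1/4)θ + (1/6)θ², β₂ = 1 − (1/3)θ², β₃ = −(1/4)θ + (1/6)θ²; and (b) if i − ϱ(s)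 is even, the composite Simpson rule (Δ/3)(g(T_{ϱ(s)}) + 4·Σ_{l=1}^{(i−ϱ(s))/2} g(T_{ϱ(s)+2l−1}) + 2·Σ_{l=1}^{(i−ϱ(s))/2 − 1} g(T_{ϱ(s)+2l}) + g(T_i)); while if i − ϱ(s) is odd, the composite Simpson rule on [T_{ϱ(s)}, T_{i−3}] (taken to be zero when i − 3 = ϱ(s)) plus the Simpson 3/8 rule (3Δ/8)(g(T_{i−3}) + 3 g(T_{i−2}) + 3 g(T_{i−1}) + g(T_i)). Then |∫_s^{T_i} g(u) du − S| ≤ K Δ⁴, uniformly in s, i and Δ. -/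
open Set Nat

/-- The composite Simpson rule for `∫_{T_ρ}^{T_j} g` on the grid `Tgrid t0 Tstar N`
(for an even number `j − ρ` of subintervals), taken to be `0` when `j = ρ`. -/
noncomputable def simpsonComp (t0 Tstar : ℝ) (N : ℕ) (g : ℝ → ℝ) (ρ j : ℕ) : ℝ :=
  if j = ρ then 0 else
    ((Tstar - t0) / N) / 3 *
      (g (Tgrid t0 Tstar N ρ)
        + 4 * ∑ l ∈ Finset.Icc 1 ((j - ρ) / 2), g (Tgrid t0 Tstar N (ρ + 2 * l - 1))
        + 2 * ∑ l ∈ Finset.Icc 1 ((j - ρ) / 2 - 1), g (Tgrid t0 Tstar N (ρ + 2 * l))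
        + g (Tgrid t0 Tstar N j))



lemma taylor_bound_two_sided {g : ℝ → ℝ} {A B C : ℝ} {n : ℕ} (hAB : A < B)
    (hg : ContDiffOn ℝ (n + 1) g (Icc A B))
    (hC : ∀ y ∈ Icc A B, |iteratedDerivWithin (n + 1) g (Icc A B) y| ≤ C)
    {x₀ x : ℝ} (hx₀ : x₀ ∈ Icc A B) (hx : x ∈ Icc A B) :
    |g x - taylorWithinEval g n (Icc A B) x₀ x| ≤ C * |x - x₀| ^ (n + 1) / (n ! : ℝ) := by
  have hC0 : 0 ≤ C := le_trans (abs_nonneg _) (hC x₀ hx₀)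
  have hf' : DifferentiableOn ℝ (iteratedDerivWithin n g (Icc A B)) (Icc A B) :=
    hg.differentiableOn_iteratedDerivWithin (by exact_mod_cast n.lt_succ_self)
      (uniqueDiffOn_Icc hAB)
  have key : ∀ t ∈ Icc A B, HasDerivWithinAt (fun y => taylorWithinEval g n (Icc A B) y x)
      (((n ! : ℝ)⁻¹ * (x - t) ^ n) • iteratedDerivWithin (n + 1) g (Icc A B) t) (Icc A B) t :=
    fun t ht => hasDerivWithinAt_taylorWithinEval_at_Icc x hAB ht hg.of_succ hf'
  set D : ℝ := (n ! : ℝ)⁻¹ * |x - x₀| ^ n * C with hD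
  rcases le_total x₀ x with h1 | h1
  · have sub : Icc x₀ x ⊆ Icc A B := Icc_subset_Icc hx₀.1 hx.2
    have bnd : ∀ t ∈ Ico x₀ x,
        ‖((n ! : ℝ)⁻¹ * (x - t) ^ n) • iteratedDerivWithin (n + 1) g (Icc A B) t‖ ≤ D := by
      intro t ht
      rw [norm_smul, Real.norm_eq_abs, Real.norm_eq_abs, hD]
      have h2 : |x - t| ≤ |x - x₀| := by
        rw [abs_of_nonneg (by linarith [ht.2.le] : (0:ℝ) ≤ x - t),
          abs_of_nonneg (by linarith : (0:ℝ) ≤ x - x₀)]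
        linarith [ht.1]
      calc |(n ! : ℝ)⁻¹ * (x - t) ^ n| * |iteratedDerivWithin (n + 1) g (Icc A B) t|
          = (n ! : ℝ)⁻¹ * |x - t| ^ n * |iteratedDerivWithin (n + 1) g (Icc A B) t| := by
            rw [abs_mul, abs_pow, abs_inv, Nat.abs_cast]
        _ ≤ (n ! : ℝ)⁻¹ * |x - x₀| ^ n * C := by
            gcongr
            · exact hC t (sub ⟨ht.1, ht.2.le⟩)
        _ = D := by rw [hD]
    have := norm_image_sub_le_of_norm_deriv_le_segment'
      (fun t ht => (key t (sub ht)).mono sub) bnd x (right_mem_Icc.2 h1)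
    simp only [taylorWithinEval_self, Real.norm_eq_abs] at this
    calc |g x - taylorWithinEval g n (Icc A B) x₀ x| ≤ D * (x - x₀) := this
      _ = C * |x - x₀| ^ (n + 1) / (n ! : ℝ) := by
          rw [hD, abs_of_nonneg (by linarith : (0:ℝ) ≤ x - x₀), pow_succ]
          field_simp
  · have sub : Icc x x₀ ⊆ Icc A B := Icc_subset_Icc hx.1 hx₀.2
    have bnd : ∀ t ∈ Ico x x₀,
        ‖((n ! : ℝ)⁻¹ * (x - t) ^ n) • iteratedDerivWithin (n + 1) g (Icc A B) t‖ ≤ D := by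
      intro t ht
      rw [norm_smul, Real.norm_eq_abs, Real.norm_eq_abs, hD]
      have h2 : |x - t| ≤ |x - x₀| := by
        rw [abs_sub_comm x t, abs_sub_comm x x₀,
          abs_of_nonneg (by linarith [ht.1] : (0:ℝ) ≤ t - x),
          abs_of_nonneg (by linarith : (0:ℝ) ≤ x₀ - x)]
        linarith [ht.2.le]
      calc |(n ! : ℝ)⁻¹ * (x - t) ^ n| * |iteratedDerivWithin (n + 1) g (Icc A B) t|
          = (n ! : ℝ)⁻¹ * |x - t| ^ n * |iteratedDerivWithin (n + 1) g (Icc A B) t| := by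
            rw [abs_mul, abs_pow, abs_inv, Nat.abs_cast]
        _ ≤ (n ! : ℝ)⁻¹ * |x - x₀| ^ n * C := by
            gcongr
            · exact hC t (sub ⟨ht.1, ht.2.le⟩)
        _ = D := by rw [hD]
    have := norm_image_sub_le_of_norm_deriv_le_segment'
      (fun t ht => (key t (sub ht)).mono sub) bnd x₀ (right_mem_Icc.2 h1)
    simp only [taylorWithinEval_self, Real.norm_eq_abs] at this
    rw [abs_sub_comm]
    calc |taylorWithinEval g n (Icc A B) x₀ x - g x| ≤ D * (x₀ - x) := this
      _ = C * |x - x₀| ^ (n + 1) / (n ! : ℝ) := by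
          rw [hD, abs_sub_comm, abs_of_nonneg (by linarith : (0:ℝ) ≤ x₀ - x), pow_succ]
          field_simp


lemma integral_sub_pow (a b c : ℝ) (k : ℕ) :
    ∫ u in a..b, (u - c) ^ k = ((b - c) ^ (k + 1) - (a - c) ^ (k + 1)) / (k + 1) := by
  have h := intervalIntegral.integral_comp_sub_right (a := a) (b := b) (fun u : ℝ => u ^ k) c
  rw [h, integral_pow]

lemma integral_cubic (a b x₀ c0 c1 c2 c3 : ℝ) :
    (∫ u in a..b, (c0 + c1 * (u - x₀) + c2 * (u - x₀) ^ 2 + c3 * (u - x₀) ^ 3)) =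
      c0 * (b - a) + c1 * ((b - x₀) ^ 2 - (a - x₀) ^ 2) / 2
        + c2 * ((b - x₀) ^ 3 - (a - x₀) ^ 3) / 3 + c3 * ((b - x₀) ^ 4 - (a - x₀) ^ 4) / 4 := by
  have hcont : ∀ k : ℕ, Continuous fun u : ℝ => (u - x₀) ^ k :=
    fun k => (continuous_id.sub continuous_const).pow k
  have hint : ∀ (c : ℝ) (k : ℕ),
      IntervalIntegrable (fun u => c * (u - x₀) ^ k) MeasureTheory.volume a b :=
    fun c k => (continuous_const.mul (hcont k)).intervalIntegrable a b
  have e : ∀ (c : ℝ) (k : ℕ), (∫ u in a..b, c * (u - x₀) ^ k)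
      = c * (((b - x₀) ^ (k + 1) - (a - x₀) ^ (k + 1)) / (k + 1)) := by
    intro c k
    rw [intervalIntegral.integral_const_mul, integral_sub_pow]
  have h0 : (fun u : ℝ => c0 + c1 * (u - x₀) + c2 * (u - x₀) ^ 2 + c3 * (u - x₀) ^ 3)
      = fun u : ℝ => c0 * (u - x₀) ^ 0 + c1 * (u - x₀) ^ 1 + c2 * (u - x₀) ^ 2
        + c3 * (u - x₀) ^ 3 := by
    funext u; ring
  rw [h0,
    intervalIntegral.integral_add (((hint c0 0).add (hint c1 1)).add (hint c2 2)) (hint c3 3),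
    intervalIntegral.integral_add ((hint c0 0).add (hint c1 1)) (hint c2 2),
    intervalIntegral.integral_add (hint c0 0) (hint c1 1), e, e, e, e]
  norm_num
  ring

lemma taylorWithinEval_three (g : ℝ → ℝ) (s : Set ℝ) (x₀ x : ℝ) :
    taylorWithinEval g 3 s x₀ x =
      g x₀ + iteratedDerivWithin 1 g s x₀ * (x - x₀)
        + iteratedDerivWithin 2 g s x₀ / 2 * (x - x₀) ^ 2
        + iteratedDerivWithin 3 g s x₀ / 6 * (x - x₀) ^ 3 := by
  rw [taylor_within_apply]
  simp [Finset.sum_range_succ, Nat.factorial]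
  ring

lemma taylorWithinEval_two (g : ℝ → ℝ) (s : Set ℝ) (x₀ x : ℝ) :
    taylorWithinEval g 2 s x₀ x =
      g x₀ + iteratedDerivWithin 1 g s x₀ * (x - x₀)
        + iteratedDerivWithin 2 g s x₀ / 2 * (x - x₀) ^ 2 := by
  rw [taylor_within_apply]
  simp [Finset.sum_range_succ, Nat.factorial]
  ring

set_option maxHeartbeats 1000000 in
lemma simpson_pair_bound {g : ℝ → ℝ} {A B C : ℝ} (hAB : A < B)
    (hg : ContDiffOn ℝ 4 g (Icc A B))
    (hC : ∀ y ∈ Icc A B, |iteratedDerivWithin 4 g (Icc A B) y| ≤ C)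
    {a h : ℝ} (hh : 0 < h) (ha : A ≤ a) (hb : a + 2 * h ≤ B) :
    |(∫ u in a..(a + 2 * h), g u) - h / 3 * (g a + 4 * g (a + h) + g (a + 2 * h))|
      ≤ 11 * C * h ^ 5 := by
  have hC0 : 0 ≤ C := le_trans (abs_nonneg _) (hC a ⟨ha, by linarith⟩)
  set d1 := iteratedDerivWithin 1 g (Icc A B) a with hd1
  set d2 := iteratedDerivWithin 2 g (Icc A B) a with hd2
  set d3 := iteratedDerivWithin 3 g (Icc A B) a with hd3
  set P : ℝ → ℝ := fun u => g a + d1 * (u - a) + d2 / 2 * (u - a) ^ 2 + d3 / 6 * (u - a) ^ 3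
    with hPdef
  have hg4 : ContDiffOn ℝ (3 + 1 : ℕ) g (Icc A B) := by exact_mod_cast hg
  have hC4 : ∀ y ∈ Icc A B, |iteratedDerivWithin (3 + 1) g (Icc A B) y| ≤ C := hC
  -- pointwise Taylor bound
  have hE : ∀ u, A ≤ u → u ≤ B → |u - a| ≤ 2 * h → |g u - P u| ≤ C * (2 * h) ^ 4 / 6 := by
    intro u h1 h2 h3
    have ht := taylor_bound_two_sided (n := 3) hAB hg4 hC4
      (x₀ := a) (x := u) ⟨ha, by linarith⟩ ⟨h1, h2⟩
    rw [taylorWithinEval_three] at ht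
    have e1 : g u - P u = g u - (g a + iteratedDerivWithin 1 g (Icc A B) a * (u - a)
        + iteratedDerivWithin 2 g (Icc A B) a / 2 * (u - a) ^ 2
        + iteratedDerivWithin 3 g (Icc A B) a / 6 * (u - a) ^ 3) := by
      rw [hPdef]
    rw [e1]
    refine le_trans ht ?_
    have h6 : ((3 : ℕ)! : ℝ) = 6 := by norm_num [Nat.factorial]
    rw [h6, show (3 + 1) = 4 from rfl]
    have h4 : |u - a| ^ 4 ≤ (2 * h) ^ 4 := pow_le_pow_left₀ (abs_nonneg _) h3 4
    have h5 := mul_le_mul_of_nonneg_left h4 hC0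
    linarith
  -- integrability
  have hgc : ContinuousOn g (Icc A B) := hg.continuousOn
  have hsub : Icc a (a + 2 * h) ⊆ Icc A B := Icc_subset_Icc ha hb
  have hgint : IntervalIntegrable g MeasureTheory.volume a (a + 2 * h) :=
    (hgc.mono hsub).intervalIntegrable_of_Icc (by linarith)
  have hPc : Continuous P := by
    rw [hPdef]; continuity
  have hPint : IntervalIntegrable P MeasureTheory.volume a (a + 2 * h) :=
    hPc.intervalIntegrable a (a + 2 * h)
  -- exactness on the cubic
  have hexact : (∫ u in a..(a + 2 * h), P u) = h / 3 * (P a + 4 * P (a + h) + P (a + 2 * h)) := by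
    rw [hPdef]
    rw [integral_cubic]
    ring
  -- decompose
  have hdecomp : (∫ u in a..(a + 2 * h), g u) - h / 3 * (g a + 4 * g (a + h) + g (a + 2 * h))
      = (∫ u in a..(a + 2 * h), (g u - P u))
        - h / 3 * ((g a - P a) + 4 * (g (a + h) - P (a + h)) + (g (a + 2 * h) - P (a + 2 * h))) := by
    rw [intervalIntegral.integral_sub hgint hPint, hexact]
    ring
  rw [hdecomp]
  set B0 : ℝ := C * (2 * h) ^ 4 / 6 with hB0
  have hB0nn : 0 ≤ B0 := by rw [hB0]; positivity
  have hIE : |∫ u in a..(a + 2 * h), (g u - P u)| ≤ B0 * |a + 2 * h - a| := by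
    rw [← Real.norm_eq_abs]
    apply intervalIntegral.norm_integral_le_of_norm_le_const
    intro x hx
    rw [uIoc_of_le (by linarith)] at hx
    rw [Real.norm_eq_abs]
    exact hE x (by linarith [hx.1.le]) (by linarith [hx.2])
      (by rw [abs_of_nonneg (by linarith [hx.1.le])]; linarith [hx.2])
  have habs : |a + 2 * h - a| = 2 * h := by
    rw [show a + 2 * h - a = 2 * h by ring, abs_of_nonneg (by linarith)]
  rw [habs] at hIE
  have hEa : |g a - P a| ≤ B0 := hE a ha (by linarith) (by rw [sub_self, abs_zero]; positivity)
  have hEb1 : |g (a + h) - P (a + h)| ≤ B0 :=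
    hE (a + h) (by linarith) (by linarith) (by rw [abs_of_nonneg (by linarith)]; linarith)
  have hEb2 : |g (a + 2 * h) - P (a + 2 * h)| ≤ B0 :=
    hE (a + 2 * h) (by linarith) (by linarith) (by rw [abs_of_nonneg (by linarith)]; linarith)
  have hsum : |(g a - P a) + 4 * (g (a + h) - P (a + h)) + (g (a + 2 * h) - P (a + 2 * h))|
      ≤ 6 * B0 := by
    have t1 := abs_add_le ((g a - P a) + 4 * (g (a + h) - P (a + h))) (g (a + 2 * h) - P (a + 2 * h))
    have t2 := abs_add_le (g a - P a) (4 * (g (a + h) - P (a + h)))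
    have t3 : |4 * (g (a + h) - P (a + h))| = 4 * |g (a + h) - P (a + h)| := by
      rw [abs_mul]; norm_num
    rw [t3] at t2
    linarith
  have hrule : |h / 3 * ((g a - P a) + 4 * (g (a + h) - P (a + h))
      + (g (a + 2 * h) - P (a + 2 * h)))| ≤ h / 3 * (6 * B0) := by
    rw [abs_mul, abs_of_nonneg (by linarith : (0:ℝ) ≤ h / 3)]
    exact mul_le_mul_of_nonneg_left hsum (by linarith)
  have tineq : ∀ X Y : ℝ, |X - Y| ≤ |X| + |Y| := fun X Y => abs_sub X Y
  refine le_trans (tineq _ _) ?_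
  have : B0 * (2 * h) + h / 3 * (6 * B0) = 4 * h * B0 := by ring
  have hfin : |∫ u in a..(a + 2 * h), (g u - P u)|
      + |h / 3 * ((g a - P a) + 4 * (g (a + h) - P (a + h))
        + (g (a + 2 * h) - P (a + 2 * h)))| ≤ 4 * h * B0 := by linarith
  refine le_trans hfin ?_
  rw [hB0]
  have e32 : 4 * h * (C * (2 * h) ^ 4 / 6) = 32 / 3 * (C * h ^ 5) := by ring
  have e11 : 11 * C * h ^ 5 = 11 * (C * h ^ 5) := by ring
  rw [e32, e11]
  linarith [mul_nonneg hC0 (pow_nonneg hh.le 5)]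

set_option maxHeartbeats 1000000 in
lemma simpson38_bound {g : ℝ → ℝ} {A B C : ℝ} (hAB : A < B)
    (hg : ContDiffOn ℝ 4 g (Icc A B))
    (hC : ∀ y ∈ Icc A B, |iteratedDerivWithin 4 g (Icc A B) y| ≤ C)
    {a h : ℝ} (hh : 0 < h) (ha : A ≤ a) (hb : a + 3 * h ≤ B) :
    |(∫ u in a..(a + 3 * h), g u)
        - 3 * h / 8 * (g a + 3 * g (a + h) + 3 * g (a + 2 * h) + g (a + 3 * h))|
      ≤ 81 * C * h ^ 5 := by
  have hC0 : 0 ≤ C := le_trans (abs_nonneg _) (hC a ⟨ha, by linarith⟩)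
  set d1 := iteratedDerivWithin 1 g (Icc A B) a with hd1
  set d2 := iteratedDerivWithin 2 g (Icc A B) a with hd2
  set d3 := iteratedDerivWithin 3 g (Icc A B) a with hd3
  set P : ℝ → ℝ := fun u => g a + d1 * (u - a) + d2 / 2 * (u - a) ^ 2 + d3 / 6 * (u - a) ^ 3
    with hPdef
  have hg4 : ContDiffOn ℝ (3 + 1 : ℕ) g (Icc A B) := by exact_mod_cast hg
  have hC4 : ∀ y ∈ Icc A B, |iteratedDerivWithin (3 + 1) g (Icc A B) y| ≤ C := hC
  have hE : ∀ u, A ≤ u → u ≤ B → |u - a| ≤ 3 * h → |g u - P u| ≤ C * (3 * h) ^ 4 / 6 := by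
    intro u h1 h2 h3
    have ht := taylor_bound_two_sided (n := 3) hAB hg4 hC4
      (x₀ := a) (x := u) ⟨ha, by linarith⟩ ⟨h1, h2⟩
    rw [taylorWithinEval_three] at ht
    have e1 : g u - P u = g u - (g a + iteratedDerivWithin 1 g (Icc A B) a * (u - a)
        + iteratedDerivWithin 2 g (Icc A B) a / 2 * (u - a) ^ 2
        + iteratedDerivWithin 3 g (Icc A B) a / 6 * (u - a) ^ 3) := by
      rw [hPdef]
    rw [e1]
    refine le_trans ht ?_
    have h6 : ((3 : ℕ)! : ℝ) = 6 := by norm_num [Nat.factorial]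
    rw [h6, show (3 + 1) = 4 from rfl]
    have h4 : |u - a| ^ 4 ≤ (3 * h) ^ 4 := pow_le_pow_left₀ (abs_nonneg _) h3 4
    have h5 := mul_le_mul_of_nonneg_left h4 hC0
    linarith
  have hgc : ContinuousOn g (Icc A B) := hg.continuousOn
  have hsub : Icc a (a + 3 * h) ⊆ Icc A B := Icc_subset_Icc ha hb
  have hgint : IntervalIntegrable g MeasureTheory.volume a (a + 3 * h) :=
    (hgc.mono hsub).intervalIntegrable_of_Icc (by linarith)
  have hPc : Continuous P := by
    rw [hPdef]; continuity
  have hPint : IntervalIntegrable P MeasureTheory.volume a (a + 3 * h) :=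
    hPc.intervalIntegrable a (a + 3 * h)
  have hexact : (∫ u in a..(a + 3 * h), P u)
      = 3 * h / 8 * (P a + 3 * P (a + h) + 3 * P (a + 2 * h) + P (a + 3 * h)) := by
    rw [hPdef]
    rw [integral_cubic]
    ring
  have hdecomp : (∫ u in a..(a + 3 * h), g u)
      - 3 * h / 8 * (g a + 3 * g (a + h) + 3 * g (a + 2 * h) + g (a + 3 * h))
      = (∫ u in a..(a + 3 * h), (g u - P u))
        - 3 * h / 8 * ((g a - P a) + 3 * (g (a + h) - P (a + h))
          + 3 * (g (a + 2 * h) - P (a + 2 * h)) + (g (a + 3 * h) - P (a + 3 * h))) := by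
    rw [intervalIntegral.integral_sub hgint hPint, hexact]
    ring
  rw [hdecomp]
  set B0 : ℝ := C * (3 * h) ^ 4 / 6 with hB0
  have hB0nn : 0 ≤ B0 := by rw [hB0]; positivity
  have hIE : |∫ u in a..(a + 3 * h), (g u - P u)| ≤ B0 * |a + 3 * h - a| := by
    rw [← Real.norm_eq_abs]
    apply intervalIntegral.norm_integral_le_of_norm_le_const
    intro x hx
    rw [uIoc_of_le (by linarith)] at hx
    rw [Real.norm_eq_abs]
    exact hE x (by linarith [hx.1.le]) (by linarith [hx.2])
      (by rw [abs_of_nonneg (by linarith [hx.1.le])]; linarith [hx.2])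
  have habs : |a + 3 * h - a| = 3 * h := by
    rw [show a + 3 * h - a = 3 * h by ring, abs_of_nonneg (by linarith)]
  rw [habs] at hIE
  have hEa : |g a - P a| ≤ B0 := hE a ha (by linarith) (by rw [sub_self, abs_zero]; positivity)
  have hEb1 : |g (a + h) - P (a + h)| ≤ B0 :=
    hE (a + h) (by linarith) (by linarith) (by rw [abs_of_nonneg (by linarith)]; linarith)
  have hEb2 : |g (a + 2 * h) - P (a + 2 * h)| ≤ B0 :=
    hE (a + 2 * h) (by linarith) (by linarith) (by rw [abs_of_nonneg (by linarith)]; linarith)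
  have hEb3 : |g (a + 3 * h) - P (a + 3 * h)| ≤ B0 :=
    hE (a + 3 * h) (by linarith) (by linarith) (by rw [abs_of_nonneg (by linarith)]; linarith)
  have hsum : |(g a - P a) + 3 * (g (a + h) - P (a + h))
      + 3 * (g (a + 2 * h) - P (a + 2 * h)) + (g (a + 3 * h) - P (a + 3 * h))| ≤ 8 * B0 := by
    have t1 := abs_add_le ((g a - P a) + 3 * (g (a + h) - P (a + h))
      + 3 * (g (a + 2 * h) - P (a + 2 * h))) (g (a + 3 * h) - P (a + 3 * h))
    have t2 := abs_add_le ((g a - P a) + 3 * (g (a + h) - P (a + h)))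
      (3 * (g (a + 2 * h) - P (a + 2 * h)))
    have t3 := abs_add_le (g a - P a) (3 * (g (a + h) - P (a + h)))
    have m1 : |3 * (g (a + h) - P (a + h))| = 3 * |g (a + h) - P (a + h)| := by
      rw [abs_mul]; norm_num
    have m2 : |3 * (g (a + 2 * h) - P (a + 2 * h))| = 3 * |g (a + 2 * h) - P (a + 2 * h)| := by
      rw [abs_mul]; norm_num
    rw [m1] at t3
    rw [m2] at t2
    linarith
  have hrule : |3 * h / 8 * ((g a - P a) + 3 * (g (a + h) - P (a + h))
      + 3 * (g (a + 2 * h) - P (a + 2 * h)) + (g (a + 3 * h) - P (a + 3 * h)))|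
      ≤ 3 * h / 8 * (8 * B0) := by
    rw [abs_mul, abs_of_nonneg (by linarith : (0:ℝ) ≤ 3 * h / 8)]
    exact mul_le_mul_of_nonneg_left hsum (by linarith)
  have tineq : ∀ X Y : ℝ, |X - Y| ≤ |X| + |Y| := fun X Y => abs_sub X Y
  refine le_trans (tineq _ _) ?_
  have hfin : |∫ u in a..(a + 3 * h), (g u - P u)|
      + |3 * h / 8 * ((g a - P a) + 3 * (g (a + h) - P (a + h))
        + 3 * (g (a + 2 * h) - P (a + 2 * h)) + (g (a + 3 * h) - P (a + 3 * h)))|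
      ≤ 6 * h * B0 := by linarith
  refine le_trans hfin ?_
  rw [hB0]
  have e32 : 6 * h * (C * (3 * h) ^ 4 / 6) = 81 * (C * h ^ 5) := by ring
  have e11 : 81 * C * h ^ 5 = 81 * (C * h ^ 5) := by ring
  rw [e32, e11]

set_option maxHeartbeats 1000000 in
lemma partial_rule_bound {g : ℝ → ℝ} {A B C : ℝ} (hAB : A < B)
    (hg : ContDiffOn ℝ 3 g (Icc A B))
    (hC3 : ∀ y ∈ Icc A B, |iteratedDerivWithin 3 g (Icc A B) y| ≤ C)
    {t Δ : ℝ} (hΔ : 0 < Δ) (hA : A ≤ t) (hB : t + 2 * Δ ≤ B)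
    (θ : ℝ) (hθ0 : 0 ≤ θ) (hθ1 : θ ≤ 1) :
    |(∫ u in (t + Δ - θ * Δ)..(t + Δ), g u) - (θ * Δ) *
        ((1/4 * θ + 1/6 * θ ^ 2) * g t
         + (1 - 1/3 * θ ^ 2) * g (t + Δ)
         + (-(1/4) * θ + 1/6 * θ ^ 2) * g (t + 2 * Δ))|
      ≤ 2 * C * Δ ^ 4 := by
  have hC0 : 0 ≤ C := le_trans (abs_nonneg _) (hC3 t ⟨hA, by linarith⟩)
  have hθsq : θ ^ 2 ≤ 1 := by
    calc θ ^ 2 ≤ 1 ^ 2 := pow_le_pow_left₀ hθ0 hθ1 2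
    _ = 1 := one_pow 2
  have hθΔ : θ * Δ ≤ Δ := by
    calc θ * Δ ≤ 1 * Δ := mul_le_mul_of_nonneg_right hθ1 hΔ.le
    _ = Δ := one_mul _
  have hθΔ0 : 0 ≤ θ * Δ := by positivity
  set d1 := iteratedDerivWithin 1 g (Icc A B) (t + Δ) with hd1
  set d2 := iteratedDerivWithin 2 g (Icc A B) (t + Δ) with hd2
  set P : ℝ → ℝ := fun u => g (t + Δ) + d1 * (u - (t + Δ)) + d2 / 2 * (u - (t + Δ)) ^ 2
    with hPdef
  have hg3 : ContDiffOn ℝ (2 + 1 : ℕ) g (Icc A B) := by exact_mod_cast hg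
  have hC3' : ∀ y ∈ Icc A B, |iteratedDerivWithin (2 + 1) g (Icc A B) y| ≤ C := hC3
  have hE : ∀ u, A ≤ u → u ≤ B → |u - (t + Δ)| ≤ Δ → |g u - P u| ≤ C * Δ ^ 3 / 2 := by
    intro u h1 h2 h3
    have ht := taylor_bound_two_sided (n := 2) hAB hg3 hC3'
      (x₀ := t + Δ) (x := u) ⟨by linarith, by linarith⟩ ⟨h1, h2⟩
    rw [taylorWithinEval_two] at ht
    have e1 : g u - P u = g u - (g (t + Δ) + iteratedDerivWithin 1 g (Icc A B) (t + Δ) * (u - (t + Δ))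
        + iteratedDerivWithin 2 g (Icc A B) (t + Δ) / 2 * (u - (t + Δ)) ^ 2) := by
      rw [hPdef]
    rw [e1]
    refine le_trans ht ?_
    have h6 : ((2 : ℕ)! : ℝ) = 2 := by norm_num [Nat.factorial]
    rw [h6, show (2 + 1) = 3 from rfl]
    have h4 : |u - (t + Δ)| ^ 3 ≤ Δ ^ 3 := pow_le_pow_left₀ (abs_nonneg _) h3 3
    have h5 := mul_le_mul_of_nonneg_left h4 hC0
    linarith
  have hgc : ContinuousOn g (Icc A B) := hg.continuousOn
  have hsub : Icc (t + Δ - θ * Δ) (t + Δ) ⊆ Icc A B :=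
    Icc_subset_Icc (by linarith) (by linarith)
  have hgint : IntervalIntegrable g MeasureTheory.volume (t + Δ - θ * Δ) (t + Δ) :=
    (hgc.mono hsub).intervalIntegrable_of_Icc (by linarith)
  have hPc : Continuous P := by rw [hPdef]; continuity
  have hPint : IntervalIntegrable P MeasureTheory.volume (t + Δ - θ * Δ) (t + Δ) :=
    hPc.intervalIntegrable _ _
  have hexact : (∫ u in (t + Δ - θ * Δ)..(t + Δ), P u) = (θ * Δ) *
      ((1/4 * θ + 1/6 * θ ^ 2) * P t + (1 - 1/3 * θ ^ 2) * P (t + Δ)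
        + (-(1/4) * θ + 1/6 * θ ^ 2) * P (t + 2 * Δ)) := by
    rw [hPdef]
    have e0 : (fun u : ℝ => g (t + Δ) + d1 * (u - (t + Δ)) + d2 / 2 * (u - (t + Δ)) ^ 2)
        = fun u : ℝ => g (t + Δ) + d1 * (u - (t + Δ)) + d2 / 2 * (u - (t + Δ)) ^ 2
          + 0 * (u - (t + Δ)) ^ 3 := by
      funext u; ring
    rw [e0, integral_cubic]
    ring
  have hdecomp : (∫ u in (t + Δ - θ * Δ)..(t + Δ), g u) - (θ * Δ) *
      ((1/4 * θ + 1/6 * θ ^ 2) * g t + (1 - 1/3 * θ ^ 2) * g (t + Δ)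
        + (-(1/4) * θ + 1/6 * θ ^ 2) * g (t + 2 * Δ))
      = (∫ u in (t + Δ - θ * Δ)..(t + Δ), (g u - P u)) - (θ * Δ) *
        ((1/4 * θ + 1/6 * θ ^ 2) * (g t - P t) + (1 - 1/3 * θ ^ 2) * (g (t + Δ) - P (t + Δ))
          + (-(1/4) * θ + 1/6 * θ ^ 2) * (g (t + 2 * Δ) - P (t + 2 * Δ))) := by
    rw [intervalIntegral.integral_sub hgint hPint, hexact]
    ring
  rw [hdecomp]
  set B0 : ℝ := C * Δ ^ 3 / 2 with hB0
  have hB0nn : 0 ≤ B0 := by rw [hB0]; positivity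
  have hIE : |∫ u in (t + Δ - θ * Δ)..(t + Δ), (g u - P u)| ≤ B0 * |t + Δ - (t + Δ - θ * Δ)| := by
    rw [← Real.norm_eq_abs]
    apply intervalIntegral.norm_integral_le_of_norm_le_const
    intro x hx
    rw [uIoc_of_le (by linarith)] at hx
    rw [Real.norm_eq_abs]
    apply hE x (by linarith [hx.1.le]) (by linarith [hx.2])
    rw [abs_of_nonpos (by linarith [hx.2] : x - (t + Δ) ≤ 0)]
    linarith [hx.1.le]
  have habs : |t + Δ - (t + Δ - θ * Δ)| ≤ Δ := by
    rw [show t + Δ - (t + Δ - θ * Δ) = θ * Δ by ring, abs_of_nonneg hθΔ0]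
    exact hθΔ
  have hIE2 : |∫ u in (t + Δ - θ * Δ)..(t + Δ), (g u - P u)| ≤ B0 * Δ :=
    le_trans hIE (mul_le_mul_of_nonneg_left habs hB0nn)
  have hEt : |g t - P t| ≤ B0 := hE t hA (by linarith)
    (by rw [abs_of_nonpos (by linarith)]; linarith)
  have hEm : |g (t + Δ) - P (t + Δ)| ≤ B0 := hE (t + Δ) (by linarith) (by linarith)
    (by rw [sub_self, abs_zero]; exact hΔ.le)
  have hEq : |g (t + 2 * Δ) - P (t + 2 * Δ)| ≤ B0 := hE (t + 2 * Δ) (by linarith) hB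
    (by rw [abs_of_nonneg (by linarith)]; linarith)
  have hb1 : |1/4 * θ + 1/6 * θ ^ 2| ≤ 1 := by
    rw [abs_of_nonneg (by positivity)]
    linarith
  have hb2 : |1 - 1/3 * θ ^ 2| ≤ 1 := by
    rw [abs_le]
    constructor <;> linarith [sq_nonneg θ]
  have hb3 : |(-(1/4)) * θ + 1/6 * θ ^ 2| ≤ 1 := by
    rw [abs_le]
    constructor <;> linarith [sq_nonneg θ]
  have u1 : |(1/4 * θ + 1/6 * θ ^ 2) * (g t - P t)| ≤ B0 := by
    rw [abs_mul]
    calc |1/4 * θ + 1/6 * θ ^ 2| * |g t - P t| ≤ 1 * B0 :=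
      mul_le_mul hb1 hEt (abs_nonneg _) zero_le_one
    _ = B0 := one_mul _
  have u2 : |(1 - 1/3 * θ ^ 2) * (g (t + Δ) - P (t + Δ))| ≤ B0 := by
    rw [abs_mul]
    calc |1 - 1/3 * θ ^ 2| * |g (t + Δ) - P (t + Δ)| ≤ 1 * B0 :=
      mul_le_mul hb2 hEm (abs_nonneg _) zero_le_one
    _ = B0 := one_mul _
  have u3 : |(-(1/4) * θ + 1/6 * θ ^ 2) * (g (t + 2 * Δ) - P (t + 2 * Δ))| ≤ B0 := by
    rw [abs_mul]
    calc |(-(1/4)) * θ + 1/6 * θ ^ 2| * |g (t + 2 * Δ) - P (t + 2 * Δ)| ≤ 1 * B0 :=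
      mul_le_mul hb3 hEq (abs_nonneg _) zero_le_one
    _ = B0 := one_mul _
  have hsum : |(1/4 * θ + 1/6 * θ ^ 2) * (g t - P t) + (1 - 1/3 * θ ^ 2) * (g (t + Δ) - P (t + Δ))
      + (-(1/4) * θ + 1/6 * θ ^ 2) * (g (t + 2 * Δ) - P (t + 2 * Δ))| ≤ 3 * B0 := by
    have t1 := abs_add_le ((1/4 * θ + 1/6 * θ ^ 2) * (g t - P t)
      + (1 - 1/3 * θ ^ 2) * (g (t + Δ) - P (t + Δ)))
      ((-(1/4) * θ + 1/6 * θ ^ 2) * (g (t + 2 * Δ) - P (t + 2 * Δ)))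
    have t2 := abs_add_le ((1/4 * θ + 1/6 * θ ^ 2) * (g t - P t))
      ((1 - 1/3 * θ ^ 2) * (g (t + Δ) - P (t + Δ)))
    linarith
  have hrule : |(θ * Δ) * ((1/4 * θ + 1/6 * θ ^ 2) * (g t - P t)
      + (1 - 1/3 * θ ^ 2) * (g (t + Δ) - P (t + Δ))
      + (-(1/4) * θ + 1/6 * θ ^ 2) * (g (t + 2 * Δ) - P (t + 2 * Δ)))| ≤ Δ * (3 * B0) := by
    rw [abs_mul, abs_of_nonneg hθΔ0]
    exact mul_le_mul hθΔ hsum (abs_nonneg _) hΔ.le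
  have tineq : ∀ X Y : ℝ, |X - Y| ≤ |X| + |Y| := fun X Y => abs_sub X Y
  refine le_trans (tineq _ _) ?_
  have hfin : B0 * Δ + Δ * (3 * B0) = 2 * C * Δ ^ 4 := by rw [hB0]; ring
  linarith

lemma Tgrid_step (t0 Tstar : ℝ) (N k : ℕ) :
    Tgrid t0 Tstar N (k + 1) = Tgrid t0 Tstar N k + (Tstar - t0) / N := by
  simp only [Tgrid]; push_cast; ring

lemma Tgrid_mono {t0 Tstar : ℝ} {N : ℕ} (hΔ : 0 ≤ (Tstar - t0) / N) {k j : ℕ} (h : k ≤ j) :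
    Tgrid t0 Tstar N k ≤ Tgrid t0 Tstar N j := by
  simp only [Tgrid]
  have : (k : ℝ) ≤ j := by exact_mod_cast h
  nlinarith

lemma simpsonComp_eq_sum (t0 Tstar : ℝ) (N : ℕ) (g : ℝ → ℝ) (ρ M : ℕ) :
    simpsonComp t0 Tstar N g ρ (ρ + 2 * (M + 1)) =
      ∑ k ∈ Finset.range (M + 1), (Tstar - t0) / N / 3 *
        (g (Tgrid t0 Tstar N (ρ + 2 * k)) + 4 * g (Tgrid t0 Tstar N (ρ + 2 * k + 1))
          + g (Tgrid t0 Tstar N (ρ + 2 * k + 2))) := by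
  have hne : ρ + 2 * (M + 1) ≠ ρ := by omega
  have hdiv : (ρ + 2 * (M + 1) - ρ) / 2 = M + 1 := by omega
  rw [simpsonComp, if_neg hne, hdiv]
  have S1 : ∑ l ∈ Finset.Icc 1 (M + 1), g (Tgrid t0 Tstar N (ρ + 2 * l - 1))
      = ∑ k ∈ Finset.range (M + 1), g (Tgrid t0 Tstar N (ρ + 2 * k + 1)) := by
    rw [← Finset.Ico_add_one_right_eq_Icc, Finset.sum_Ico_eq_sum_range]
    refine Finset.sum_congr (by norm_num) ?_
    intro i _
    have h' : ρ + 2 * (1 + i) - 1 = ρ + 2 * i + 1 := by omega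
    rw [h']
  have S2 : ∑ l ∈ Finset.Icc 1 (M + 1 - 1), g (Tgrid t0 Tstar N (ρ + 2 * l))
      = ∑ k ∈ Finset.range M, g (Tgrid t0 Tstar N (ρ + 2 * k + 2)) := by
    rw [← Finset.Ico_add_one_right_eq_Icc, Finset.sum_Ico_eq_sum_range]
    refine Finset.sum_congr (by norm_num) ?_
    intro i _
    have h' : ρ + 2 * (1 + i) = ρ + 2 * i + 2 := by omega
    rw [h']
  rw [S1, S2]
  have R1 : ∑ k ∈ Finset.range (M + 1), (Tstar - t0) / N / 3 *
        (g (Tgrid t0 Tstar N (ρ + 2 * k)) + 4 * g (Tgrid t0 Tstar N (ρ + 2 * k + 1))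
          + g (Tgrid t0 Tstar N (ρ + 2 * k + 2)))
      = (Tstar - t0) / N / 3 *
        ((∑ k ∈ Finset.range (M + 1), g (Tgrid t0 Tstar N (ρ + 2 * k)))
          + 4 * (∑ k ∈ Finset.range (M + 1), g (Tgrid t0 Tstar N (ρ + 2 * k + 1)))
          + (∑ k ∈ Finset.range (M + 1), g (Tgrid t0 Tstar N (ρ + 2 * k + 2)))) := by
    rw [← Finset.mul_sum]
    congr 1
    rw [Finset.sum_add_distrib, Finset.sum_add_distrib, ← Finset.mul_sum]
  rw [R1]
  have E1 : ∑ k ∈ Finset.range (M + 1), g (Tgrid t0 Tstar N (ρ + 2 * k))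
      = g (Tgrid t0 Tstar N ρ) + ∑ k ∈ Finset.range M, g (Tgrid t0 Tstar N (ρ + 2 * k + 2)) := by
    rw [Finset.sum_range_succ']
    have h1 : ∀ i, ρ + 2 * (i + 1) = ρ + 2 * i + 2 := fun i => by omega
    simp only [h1, Nat.mul_zero, Nat.add_zero]
    ring
  have E2 : ∑ k ∈ Finset.range (M + 1), g (Tgrid t0 Tstar N (ρ + 2 * k + 2))
      = (∑ k ∈ Finset.range M, g (Tgrid t0 Tstar N (ρ + 2 * k + 2)))
        + g (Tgrid t0 Tstar N (ρ + 2 * (M + 1))) := by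
    rw [Finset.sum_range_succ, show ρ + 2 * (M + 1) = ρ + 2 * M + 2 from by omega]
  rw [E1, E2]
  ring

set_option maxHeartbeats 1000000 in
lemma simpson_comp_bound (t0 Tstar : ℝ) (N : ℕ) {g : ℝ → ℝ} {A B C : ℝ} (hAB : A < B)
    (hg : ContDiffOn ℝ 4 g (Icc A B))
    (hC : ∀ y ∈ Icc A B, |iteratedDerivWithin 4 g (Icc A B) y| ≤ C)
    (hΔ : 0 < (Tstar - t0) / N) (ρ m : ℕ)
    (hA : A ≤ Tgrid t0 Tstar N ρ) (hB : Tgrid t0 Tstar N (ρ + 2 * m) ≤ B) :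
    |(∫ u in (Tgrid t0 Tstar N ρ)..(Tgrid t0 Tstar N (ρ + 2 * m)), g u)
        - simpsonComp t0 Tstar N g ρ (ρ + 2 * m)|
      ≤ m * (11 * C * ((Tstar - t0) / N) ^ 5) := by
  rcases m with _ | M
  · simp [simpsonComp]
  · set Δ : ℝ := (Tstar - t0) / N with hΔdef
    set a : ℕ → ℝ := fun k => Tgrid t0 Tstar N (ρ + 2 * k) with hadef
    have ha0 : a 0 = Tgrid t0 Tstar N ρ := by rw [hadef]; norm_num
    have hastep : ∀ k, a (k + 1) = a k + 2 * Δ := by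
      intro k
      rw [hadef]
      simp only [Tgrid, hΔdef]
      push_cast
      ring
    have hamono : ∀ {k j : ℕ}, k ≤ j → a k ≤ a j := by
      intro k j hkj
      rw [hadef]
      exact Tgrid_mono hΔ.le (by omega)
    have haA : ∀ k, A ≤ a k := fun k => le_trans (ha0 ▸ hA) (hamono (Nat.zero_le k))
    have haB : ∀ k, k ≤ M + 1 → a k ≤ B := fun k hk => le_trans (hamono hk) hB
    have hgc : ContinuousOn g (Icc A B) := hg.continuousOn
    have hint : ∀ k, k < M + 1 → IntervalIntegrable g MeasureTheory.volume (a k) (a (k + 1)) := by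
      intro k hk
      apply ContinuousOn.intervalIntegrable_of_Icc (hamono (Nat.le_succ k))
      exact hgc.mono (Icc_subset_Icc (haA k) (haB (k + 1) (by omega)))
    have hsplit := intervalIntegral.sum_integral_adjacent_intervals
      (μ := MeasureTheory.volume) (f := g) (a := a) (n := M + 1) hint
    rw [simpsonComp_eq_sum]
    rw [← ha0, show Tgrid t0 Tstar N (ρ + 2 * (M + 1)) = a (M + 1) from by rw [hadef], ← hsplit]
    rw [← Finset.sum_sub_distrib]
    refine le_trans (Finset.abs_sum_le_sum_abs _ _) ?_
    have hbound : ∀ k ∈ Finset.range (M + 1),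
        |(∫ u in (a k)..(a (k + 1)), g u) - Δ / 3 *
          (g (Tgrid t0 Tstar N (ρ + 2 * k)) + 4 * g (Tgrid t0 Tstar N (ρ + 2 * k + 1))
            + g (Tgrid t0 Tstar N (ρ + 2 * k + 2)))| ≤ 11 * C * Δ ^ 5 := by
      intro k hk
      rw [Finset.mem_range] at hk
      have e1 : Tgrid t0 Tstar N (ρ + 2 * k) = a k := by rw [hadef]
      have e2 : Tgrid t0 Tstar N (ρ + 2 * k + 1) = a k + Δ := by
        rw [hadef]; simp only [Tgrid, hΔdef]; push_cast; ring
      have e3 : Tgrid t0 Tstar N (ρ + 2 * k + 2) = a k + 2 * Δ := by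
        rw [hadef]; simp only [Tgrid, hΔdef]; push_cast; ring
      have e4 : a (k + 1) = a k + 2 * Δ := hastep k
      rw [e1, e2, e3, e4]
      exact simpson_pair_bound hAB hg hC hΔ (haA k)
        (by rw [← e3]; exact le_trans (Tgrid_mono hΔ.le (by omega)) hB)
    refine le_trans (Finset.sum_le_sum hbound) ?_
    rw [Finset.sum_const, Finset.card_range, nsmul_eq_mul]

set_option maxHeartbeats 4000000 in
/-- Order-four error bound, uniform in `s`, `i` and `Δ`, for the paper's composite
quadrature: the partial-interval three-node rule on `[s, T_{ϱ(s)}]` plus the composite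
Simpson rule (with a Simpson 3/8 correction on the last three subintervals when the
number of remaining subintervals is odd). -/
theorem composite_simpson_drift_quadrature_order_four
    (t0 Tstar : ℝ) (h : t0 < Tstar) (C : ℝ) (hC : 0 < C) :
    ∃ K > 0, ∀ N : ℕ, 0 < N →
      ∀ s : ℝ, t0 ≤ s → s < Tstar →
      ∀ ℓ : ℕ, Tgrid t0 Tstar N ℓ ≤ s → s < Tgrid t0 Tstar N (ℓ + 1) →
      ∀ i : ℕ, ℓ + 3 ≤ i → i ≤ N →
      ∀ g : ℝ → ℝ,
        ContDiffOn ℝ 4 g (Set.Icc (Tgrid t0 Tstar N ℓ) (Tgrid t0 Tstar N i)) →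
        (∀ j : ℕ, 1 ≤ j → j ≤ 4 →
          ∀ u ∈ Set.Icc (Tgrid t0 Tstar N ℓ) (Tgrid t0 Tstar N i),
            |iteratedDerivWithin j g
                (Set.Icc (Tgrid t0 Tstar N ℓ) (Tgrid t0 Tstar N i)) u| ≤ C) →
        let Δ : ℝ := (Tstar - t0) / N
        let θ : ℝ := (Tgrid t0 Tstar N (ℓ + 1) - s) / Δ
        let Spart : ℝ := (Tgrid t0 Tstar N (ℓ + 1) - s) *
          ((1/4 * θ + 1/6 * θ^2) * g (Tgrid t0 Tstar N ℓ) +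
           (1 - 1/3 * θ^2) * g (Tgrid t0 Tstar N (ℓ + 1)) +
           (-(1/4) * θ + 1/6 * θ^2) * g (Tgrid t0 Tstar N (ℓ + 2)))
        let S : ℝ := Spart +
          (if (i - (ℓ + 1)) % 2 = 0 then simpsonComp t0 Tstar N g (ℓ + 1) i
           else simpsonComp t0 Tstar N g (ℓ + 1) (i - 3) +
             3 * Δ / 8 *
               (g (Tgrid t0 Tstar N (i - 3)) + 3 * g (Tgrid t0 Tstar N (i - 2)) +
                3 * g (Tgrid t0 Tstar N (i - 1)) + g (Tgrid t0 Tstar N i)))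
        |(∫ u in s..(Tgrid t0 Tstar N i), g u) - S| ≤ K * Δ^4 := by
  refine ⟨C * (100 + 100 * (Tstar - t0)), by nlinarith, ?_⟩
  intro N hN s hs0 hsT ℓ hℓ1 hℓ2 i hi1 hi2 g hg hCj Δ θ Spart S
  have hΔeq : Δ = (Tstar - t0) / N := rfl
  have hθeq : θ = (Tgrid t0 Tstar N (ℓ + 1) - s) / Δ := rfl
  have hSparteq : Spart = (Tgrid t0 Tstar N (ℓ + 1) - s) *
          ((1/4 * θ + 1/6 * θ^2) * g (Tgrid t0 Tstar N ℓ) +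
           (1 - 1/3 * θ^2) * g (Tgrid t0 Tstar N (ℓ + 1)) +
           (-(1/4) * θ + 1/6 * θ^2) * g (Tgrid t0 Tstar N (ℓ + 2))) := rfl
  have hSeq : S = Spart +
          (if (i - (ℓ + 1)) % 2 = 0 then simpsonComp t0 Tstar N g (ℓ + 1) i
           else simpsonComp t0 Tstar N g (ℓ + 1) (i - 3) +
             3 * Δ / 8 *
               (g (Tgrid t0 Tstar N (i - 3)) + 3 * g (Tgrid t0 Tstar N (i - 2)) +
                3 * g (Tgrid t0 Tstar N (i - 1)) + g (Tgrid t0 Tstar N i))) := rfl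
  clear_value Δ θ Spart S
  -- basic grid facts
  have hΔpos : 0 < Δ := by
    rw [hΔeq]
    apply _root_.div_pos (by linarith) (by exact_mod_cast hN)
  have hNΔ : (N : ℝ) * Δ = Tstar - t0 := by
    rw [hΔeq]
    field_simp
  have hΔle : Δ ≤ Tstar - t0 := by
    have h1 : (1 : ℝ) ≤ (N : ℝ) := by exact_mod_cast hN
    nlinarith
  have hgrid : ∀ k : ℕ, Tgrid t0 Tstar N k = t0 + k * Δ := by
    intro k; rw [hΔeq]; rfl
  have hgrid_add : ∀ k r : ℕ, Tgrid t0 Tstar N (k + r) = Tgrid t0 Tstar N k + r * Δ := by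
    intro k r; rw [hgrid, hgrid]; push_cast; ring
  have hABv : Tgrid t0 Tstar N ℓ < Tgrid t0 Tstar N i := by
    rw [hgrid, hgrid]
    have : (ℓ : ℝ) < i := by exact_mod_cast (by omega : ℓ < i)
    nlinarith
  have hmono : ∀ {k j : ℕ}, k ≤ j → Tgrid t0 Tstar N k ≤ Tgrid t0 Tstar N j := by
    intro k j hkj
    rw [hgrid, hgrid]
    have : (k : ℝ) ≤ j := by exact_mod_cast hkj
    nlinarith
  have hC4 : ∀ y ∈ Icc (Tgrid t0 Tstar N ℓ) (Tgrid t0 Tstar N i),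
      |iteratedDerivWithin 4 g (Icc (Tgrid t0 Tstar N ℓ) (Tgrid t0 Tstar N i)) y| ≤ C :=
    fun y hy => hCj 4 (by norm_num) (by norm_num) y hy
  have hC3 : ∀ y ∈ Icc (Tgrid t0 Tstar N ℓ) (Tgrid t0 Tstar N i),
      |iteratedDerivWithin 3 g (Icc (Tgrid t0 Tstar N ℓ) (Tgrid t0 Tstar N i)) y| ≤ C :=
    fun y hy => hCj 3 (by norm_num) (by norm_num) y hy
  have hg3 : ContDiffOn ℝ 3 g (Icc (Tgrid t0 Tstar N ℓ) (Tgrid t0 Tstar N i)) :=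
    hg.of_le (by norm_num)
  -- node identities
  have hT1 : Tgrid t0 Tstar N (ℓ + 1) = Tgrid t0 Tstar N ℓ + Δ := by
    rw [hgrid_add]; norm_num
  have hT2 : Tgrid t0 Tstar N (ℓ + 2) = Tgrid t0 Tstar N ℓ + 2 * Δ := by
    rw [hgrid_add]; push_cast; ring
  -- θ facts
  have hθΔ : θ * Δ = Tgrid t0 Tstar N (ℓ + 1) - s := by
    rw [hθeq]; field_simp
  have hθΔ' : θ * Δ = Tgrid t0 Tstar N ℓ + Δ - s := by rw [hθΔ, hT1]
  have hθ0 : 0 ≤ θ := by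
    rw [hθeq]
    apply div_nonneg (by linarith) hΔpos.le
  have hθ1 : θ ≤ 1 := by
    rw [hθeq, div_le_one hΔpos, hT1]
    linarith
  -- partial rule bound
  have hpart := partial_rule_bound (t := Tgrid t0 Tstar N ℓ) (Δ := Δ) hABv hg3 hC3 hΔpos
    (le_refl _) (by rw [← hT2]; exact hmono (by omega)) θ hθ0 hθ1
  have hs_eq : Tgrid t0 Tstar N ℓ + Δ - θ * Δ = s := by rw [hθΔ']; ring
  rw [hs_eq] at hpart
  -- integrability and splitting
  have hgc : ContinuousOn g (Icc (Tgrid t0 Tstar N ℓ) (Tgrid t0 Tstar N i)) := hg.continuousOn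
  have hsA : Tgrid t0 Tstar N ℓ ≤ s := hℓ1
  have hsT1 : s ≤ Tgrid t0 Tstar N ℓ + Δ := by rw [← hT1]; exact hℓ2.le
  have hT1le : Tgrid t0 Tstar N ℓ + Δ ≤ Tgrid t0 Tstar N i := by
    rw [← hT1]; exact hmono (by omega)
  have hgint1 : IntervalIntegrable g MeasureTheory.volume s (Tgrid t0 Tstar N ℓ + Δ) := by
    apply ContinuousOn.intervalIntegrable_of_Icc hsT1
    exact hgc.mono (Icc_subset_Icc hsA hT1le)
  have hgint2 : IntervalIntegrable g MeasureTheory.volume (Tgrid t0 Tstar N ℓ + Δ)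
      (Tgrid t0 Tstar N i) := by
    apply ContinuousOn.intervalIntegrable_of_Icc hT1le
    exact hgc.mono (Icc_subset_Icc (by linarith) (le_refl _))
  have hsplit : (∫ u in s..(Tgrid t0 Tstar N i), g u)
      = (∫ u in s..(Tgrid t0 Tstar N ℓ + Δ), g u)
        + ∫ u in (Tgrid t0 Tstar N ℓ + Δ)..(Tgrid t0 Tstar N i), g u :=
    (intervalIntegral.integral_add_adjacent_intervals hgint1 hgint2).symm
  have tri : ∀ x y z w : ℝ, |(x + y) - (z + w)| ≤ |x - z| + |y - w| := by
    intro x y z w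
    rw [show (x + y) - (z + w) = (x - z) + (y - w) from by ring]
    exact abs_add_le _ _
  -- numeric helpers
  have hCΔ4 : (0:ℝ) < C * Δ ^ 4 := mul_pos hC (pow_pos hΔpos 4)
  have hCΔ4T : (0:ℝ) < C * Δ ^ 4 * (Tstar - t0) := mul_pos hCΔ4 (by linarith)
  -- rewrite goal
  rw [hSeq, hSparteq, hsplit, hT1, hT2, ← hθΔ']
  by_cases hpar : (i - (ℓ + 1)) % 2 = 0
  · -- even case
    rw [if_pos hpar]
    obtain ⟨m, hieq⟩ : ∃ m, i = ℓ + 1 + 2 * m := ⟨(i - (ℓ + 1)) / 2, by omega⟩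
    have hcomp := simpson_comp_bound t0 Tstar N hABv hg hC4 (by rw [← hΔeq]; exact hΔpos) (ℓ + 1) m
      (hmono (by omega)) (hmono (by omega : ℓ + 1 + 2 * m ≤ i))
    rw [← hΔeq, hT1, show ℓ + 1 + 2 * m = i from hieq.symm] at hcomp
    have hmΔ : (m : ℝ) * Δ ≤ Tstar - t0 := by
      have h1 : (m : ℝ) ≤ N := by exact_mod_cast (by omega : m ≤ N)
      calc (m : ℝ) * Δ ≤ (N : ℝ) * Δ := mul_le_mul_of_nonneg_right h1 hΔpos.le
      _ = Tstar - t0 := hNΔ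
    refine le_trans (tri _ _ _ _) ?_
    refine le_trans (add_le_add hpart hcomp) ?_
    have e : (m : ℝ) * (11 * C * Δ ^ 5) = 11 * (C * Δ ^ 4) * ((m : ℝ) * Δ) := by ring
    rw [e]
    have h2 : 11 * (C * Δ ^ 4) * ((m : ℝ) * Δ) ≤ 11 * (C * Δ ^ 4) * (Tstar - t0) :=
      mul_le_mul_of_nonneg_left hmΔ (by linarith)
    have h3 : C * (100 + 100 * (Tstar - t0)) * Δ ^ 4
        = 100 * (C * Δ ^ 4) + 100 * (C * Δ ^ 4 * (Tstar - t0)) := by ring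
    have h4 : 11 * (C * Δ ^ 4) * (Tstar - t0) = 11 * (C * Δ ^ 4 * (Tstar - t0)) := by ring
    rw [h3]
    linarith
  · -- odd case
    rw [if_neg hpar]
    obtain ⟨m, hieq⟩ : ∃ m, i = ℓ + 1 + 2 * m + 3 := ⟨(i - 3 - (ℓ + 1)) / 2, by omega⟩
    have hcomp := simpson_comp_bound t0 Tstar N hABv hg hC4 (by rw [← hΔeq]; exact hΔpos) (ℓ + 1) m
      (hmono (by omega)) (hmono (by omega : ℓ + 1 + 2 * m ≤ i))
    rw [← hΔeq, hT1, show ℓ + 1 + 2 * m = i - 3 from by omega] at hcomp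
    -- 3/8 block
    have e3 : Tgrid t0 Tstar N (i - 3) + 3 * Δ = Tgrid t0 Tstar N i := by
      rw [show i = (i - 3) + 3 from by omega, hgrid_add]
      push_cast; ring
    have e2 : Tgrid t0 Tstar N (i - 3) + 2 * Δ = Tgrid t0 Tstar N (i - 1) := by
      rw [show i - 1 = (i - 3) + 2 from by omega, hgrid_add]
      push_cast; ring
    have e1 : Tgrid t0 Tstar N (i - 3) + Δ = Tgrid t0 Tstar N (i - 2) := by
      rw [show i - 2 = (i - 3) + 1 from by omega, hgrid_add]
      push_cast; ring
    have h38 := simpson38_bound hABv hg hC4 hΔpos (a := Tgrid t0 Tstar N (i - 3))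
      (hmono (by omega)) (by rw [e3])
    rw [e1, e2, e3] at h38
    -- split second integral
    have hmid1 : Tgrid t0 Tstar N ℓ + Δ ≤ Tgrid t0 Tstar N (i - 3) := by
      rw [← hT1]; exact hmono (by omega)
    have hmid2 : Tgrid t0 Tstar N (i - 3) ≤ Tgrid t0 Tstar N i := hmono (by omega)
    have hgint3 : IntervalIntegrable g MeasureTheory.volume (Tgrid t0 Tstar N ℓ + Δ)
        (Tgrid t0 Tstar N (i - 3)) := by
      apply ContinuousOn.intervalIntegrable_of_Icc hmid1
      exact hgc.mono (Icc_subset_Icc (by linarith) hmid2)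
    have hgint4 : IntervalIntegrable g MeasureTheory.volume (Tgrid t0 Tstar N (i - 3))
        (Tgrid t0 Tstar N i) := by
      apply ContinuousOn.intervalIntegrable_of_Icc hmid2
      exact hgc.mono (Icc_subset_Icc (by linarith) (le_refl _))
    have hsplit2 : (∫ u in (Tgrid t0 Tstar N ℓ + Δ)..(Tgrid t0 Tstar N i), g u)
        = (∫ u in (Tgrid t0 Tstar N ℓ + Δ)..(Tgrid t0 Tstar N (i - 3)), g u)
          + ∫ u in (Tgrid t0 Tstar N (i - 3))..(Tgrid t0 Tstar N i), g u :=
      (intervalIntegral.integral_add_adjacent_intervals hgint3 hgint4).symm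
    rw [hsplit2]
    have hmΔ : (m : ℝ) * Δ ≤ Tstar - t0 := by
      have h1 : (m : ℝ) ≤ N := by exact_mod_cast (by omega : m ≤ N)
      calc (m : ℝ) * Δ ≤ (N : ℝ) * Δ := mul_le_mul_of_nonneg_right h1 hΔpos.le
      _ = Tstar - t0 := hNΔ
    have tri3 : ∀ x y z a b c : ℝ, |(x + (y + z)) - (a + (b + c))|
        ≤ |x - a| + |y - b| + |z - c| := by
      intro x y z a b c
      rw [show (x + (y + z)) - (a + (b + c)) = ((x - a) + (y - b)) + (z - c) from by ring]
      refine le_trans (abs_add_le _ _) ?_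
      exact add_le_add (abs_add_le _ _) le_rfl
    refine le_trans (tri3 _ _ _ _ _ _) ?_
    refine le_trans (add_le_add (add_le_add hpart hcomp) h38) ?_
    have e : (m : ℝ) * (11 * C * Δ ^ 5) = 11 * (C * Δ ^ 4) * ((m : ℝ) * Δ) := by ring
    have e' : 81 * C * Δ ^ 5 = 81 * (C * Δ ^ 4) * Δ := by ring
    rw [e, e']
    have h2 : 11 * (C * Δ ^ 4) * ((m : ℝ) * Δ) ≤ 11 * (C * Δ ^ 4) * (Tstar - t0) :=
      mul_le_mul_of_nonneg_left hmΔ (by linarith)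
    have h2' : 81 * (C * Δ ^ 4) * Δ ≤ 81 * (C * Δ ^ 4) * (Tstar - t0) :=
      mul_le_mul_of_nonneg_left hΔle (by linarith)
    have h3 : C * (100 + 100 * (Tstar - t0)) * Δ ^ 4
        = 100 * (C * Δ ^ 4) + 100 * (C * Δ ^ 4 * (Tstar - t0)) := by ring
    have h4 : 11 * (C * Δ ^ 4) * (Tstar - t0) = 11 * (C * Δ ^ 4 * (Tstar - t0)) := by ring
    have h5 : 81 * (C * Δ ^ 4) * (Tstar - t0) = 81 * (C * Δ ^ 4 * (Tstar - t0)) := by ring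
    rw [h3]
    linarith
end

section
/- Let C > 0, Δ ≥ h > 0, and let T_ℓ < T_ϱ = T_ℓ + Δ be two real numbers. Let [a, a + h] ⊆ [T_ℓ, T_ϱ] and let g₁, g₂ : [a, a + h] → ℝ be continuously differentiable with |g₁'| ≤ C and |g₂'| ≤ C. Set m = a + h/2. Then |∫_a^{a+h} ( ((s − T_ℓ)/Δ) g₂(s) + ((T_ϱ − s)/Δ) g₁(s) ) ds − h·( ((m − T_ℓ)/Δ) g₂(a) + ((T_ϱ − m)/Δ) g₁(a) )| ≤ C h², where the bound C h² is independent of Δ (in particular it does not degrade as Δ becomes much larger than h). -/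
/-- One-step time-quadrature for the linearly interpolated short rate: freezing `g₁, g₂`
at the left endpoint while integrating the interpolation weights exactly gives a local
error of order `h²` uniformly in `Δ` (here `T_ϱ = T_ℓ + Δ` and `m = a + h/2`). -/
theorem interpolated_short_rate_one_step_quadrature
    (C Δ h Tl a : ℝ) (hC : 0 < C) (hh : 0 < h) (hhΔ : h ≤ Δ)
    (hal : Tl ≤ a) (har : a + h ≤ Tl + Δ)
    (g₁ g₂ : ℝ → ℝ)
    (hg₁ : ContDiffOn ℝ 1 g₁ (Set.Icc a (a + h)))
    (hg₂ : ContDiffOn ℝ 1 g₂ (Set.Icc a (a + h)))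
    (hb₁ : ∀ u ∈ Set.Icc a (a + h),
      |iteratedDerivWithin 1 g₁ (Set.Icc a (a + h)) u| ≤ C)
    (hb₂ : ∀ u ∈ Set.Icc a (a + h),
      |iteratedDerivWithin 1 g₂ (Set.Icc a (a + h)) u| ≤ C) :
    |(∫ s in a..(a + h), (((s - Tl) / Δ) * g₂ s + ((Tl + Δ - s) / Δ) * g₁ s)) -
        h * (((a + h / 2 - Tl) / Δ) * g₂ a + ((Tl + Δ - (a + h / 2)) / Δ) * g₁ a)|
      ≤ C * h^2 := by
  have hΔ : (0:ℝ) < Δ := lt_of_lt_of_le hh hhΔ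
  have hab : a ≤ a + h := by linarith
  set I := Set.Icc a (a + h) with hI
  have hconv : Convex ℝ I := convex_Icc _ _
  have hud : UniqueDiffOn ℝ I := uniqueDiffOn_Icc (by linarith)
  -- Lipschitz estimates
  have key : ∀ (g : ℝ → ℝ), ContDiffOn ℝ 1 g I →
      (∀ u ∈ I, |iteratedDerivWithin 1 g I u| ≤ C) →
      ∀ s ∈ I, |g s - g a| ≤ C * (s - a) := by
    intro g hg hb s hs
    have hdiff : DifferentiableOn ℝ g I := hg.differentiableOn one_ne_zero
    have hbd : ∀ x ∈ I, ‖derivWithin g I x‖ ≤ C := by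
      intro x hx
      have := hb x hx
      rw [iteratedDerivWithin_one] at this
      rwa [Real.norm_eq_abs]
    have ha : a ∈ I := Set.left_mem_Icc.2 hab
    have := hconv.norm_image_sub_le_of_norm_derivWithin_le hdiff hbd ha hs
    rw [Real.norm_eq_abs, Real.norm_eq_abs] at this
    calc |g s - g a| ≤ C * |s - a| := this
      _ = C * (s - a) := by rw [abs_of_nonneg (by linarith [hs.1])]
  have lip₁ := key g₁ hg₁ hb₁
  have lip₂ := key g₂ hg₂ hb₂
  -- Continuity / integrability
  have hc₁ : ContinuousOn g₁ I := hg₁.continuousOn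
  have hc₂ : ContinuousOn g₂ I := hg₂.continuousOn
  have hIuIcc : Set.uIcc a (a + h) = I := by rw [Set.uIcc_of_le hab]
  have hintF : IntervalIntegrable
      (fun s => ((s - Tl) / Δ) * g₂ s + ((Tl + Δ - s) / Δ) * g₁ s) MeasureTheory.volume a (a + h) := by
    apply ContinuousOn.intervalIntegrable
    rw [hIuIcc]
    exact (((continuousOn_id.sub continuousOn_const).div_const _).mul hc₂).add
      (((continuousOn_const.sub continuousOn_id).div_const _).mul hc₁)
  have hintG : IntervalIntegrable
      (fun s => ((s - Tl) / Δ) * g₂ a + ((Tl + Δ - s) / Δ) * g₁ a) MeasureTheory.volume a (a + h) := by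
    apply ContinuousOn.intervalIntegrable
    rw [hIuIcc]
    exact (((continuousOn_id.sub continuousOn_const).div_const _).mul continuousOn_const).add
      (((continuousOn_const.sub continuousOn_id).div_const _).mul continuousOn_const)
  -- the frozen term equals the integral of G
  have hG : (∫ s in a..(a + h), (((s - Tl) / Δ) * g₂ a + ((Tl + Δ - s) / Δ) * g₁ a))
      = h * (((a + h / 2 - Tl) / Δ) * g₂ a + ((Tl + Δ - (a + h / 2)) / Δ) * g₁ a) := by
    have : ∀ s : ℝ, ((s - Tl) / Δ) * g₂ a + ((Tl + Δ - s) / Δ) * g₁ a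
        = ((g₂ a - g₁ a) / Δ) * s + (((Tl + Δ) * g₁ a - Tl * g₂ a) / Δ) := by
      intro s; field_simp; ring
    simp_rw [this]
    rw [intervalIntegral.integral_add ((intervalIntegral.intervalIntegrable_id).const_mul _)
        (intervalIntegrable_const), intervalIntegral.integral_const_mul,
        integral_id, intervalIntegral.integral_const]
    simp only [smul_eq_mul]
    field_simp
    ring
  rw [← hG, ← intervalIntegral.integral_sub hintF hintG]
  have hbound : ∀ s ∈ I,
      |(((s - Tl) / Δ) * g₂ s + ((Tl + Δ - s) / Δ) * g₁ s)
        - (((s - Tl) / Δ) * g₂ a + ((Tl + Δ - s) / Δ) * g₁ a)| ≤ C * (s - a) := by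
    intro s hs
    have h1 : (0:ℝ) ≤ (s - Tl) / Δ := div_nonneg (by linarith [hs.1]) hΔ.le
    have h2 : (0:ℝ) ≤ (Tl + Δ - s) / Δ := div_nonneg (by linarith [hs.2]) hΔ.le
    have hsum : (s - Tl) / Δ + (Tl + Δ - s) / Δ = 1 := by field_simp; ring
    have e : (((s - Tl) / Δ) * g₂ s + ((Tl + Δ - s) / Δ) * g₁ s)
        - (((s - Tl) / Δ) * g₂ a + ((Tl + Δ - s) / Δ) * g₁ a)
        = ((s - Tl) / Δ) * (g₂ s - g₂ a) + ((Tl + Δ - s) / Δ) * (g₁ s - g₁ a) := by ring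
    rw [e]
    calc |((s - Tl) / Δ) * (g₂ s - g₂ a) + ((Tl + Δ - s) / Δ) * (g₁ s - g₁ a)|
        ≤ |((s - Tl) / Δ) * (g₂ s - g₂ a)| + |((Tl + Δ - s) / Δ) * (g₁ s - g₁ a)| := abs_add_le _ _
      _ = ((s - Tl) / Δ) * |g₂ s - g₂ a| + ((Tl + Δ - s) / Δ) * |g₁ s - g₁ a| := by
          rw [abs_mul, abs_mul, abs_of_nonneg h1, abs_of_nonneg h2]
      _ ≤ ((s - Tl) / Δ) * (C * (s - a)) + ((Tl + Δ - s) / Δ) * (C * (s - a)) := by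
          gcongr
          · exact lip₂ s hs
          · exact lip₁ s hs
      _ = C * (s - a) := by rw [← add_mul, hsum, one_mul]
  calc |∫ s in a..(a + h), ((((s - Tl) / Δ) * g₂ s + ((Tl + Δ - s) / Δ) * g₁ s)
          - (((s - Tl) / Δ) * g₂ a + ((Tl + Δ - s) / Δ) * g₁ a))|
      ≤ ∫ s in a..(a + h), |(((s - Tl) / Δ) * g₂ s + ((Tl + Δ - s) / Δ) * g₁ s)
          - (((s - Tl) / Δ) * g₂ a + ((Tl + Δ - s) / Δ) * g₁ a)| :=
        intervalIntegral.abs_integral_le_integral_abs hab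
    _ ≤ ∫ s in a..(a + h), C * (s - a) := by
        apply intervalIntegral.integral_mono_on hab ((hintF.sub hintG).abs) _ hbound
        apply ContinuousOn.intervalIntegrable
        exact continuousOn_const.mul (continuousOn_id.sub continuousOn_const)
    _ = C * (h^2 / 2) := by
        rw [intervalIntegral.integral_const_mul]
        have : (∫ s in a..(a + h), (s - a)) = h^2/2 := by
          rw [intervalIntegral.integral_sub intervalIntegral.intervalIntegrable_id
            intervalIntegrable_const, integral_id,
            intervalIntegral.integral_const]
          simp only [smul_eq_mul]
          ring
        rw [this]
    _ ≤ C * h^2 := by nlinarith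
end

section
/- Under the stated assumptions, suppose in addition that the quadrature has order p along the exact solution: there exist p > 0 and C₁ > 0 such that for all s ∈ [t0, t*], all i = 0,…,N and all j = 1,…,d, |Δ·Σ_{k=ℓ(s)}^{κ(s,T_i)} γ_k(s) σ_j(s, T_k, f(s, T_k)) − ∫_s^{T_i} σ_j(s, u, f(s, u)) du| ≤ C₁ Δ^p. Then there exists a constant K > 0 depending only on C, L, Γ, C₁, d, t* − t0 and T* − t0 (and not on Δ or N) such that |f̃^i(t) − f(t, T_i)| ≤ K Δ^p for all t ∈ [t0, t*] and all i = 0,…,N. -/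
/-- `ℓ(s)`: the largest grid index `i` with `T_i ≤ s`. -/
noncomputable def ellIdx (t0 Tstar : ℝ) (N : ℕ) (s : ℝ) : ℕ :=
  Nat.floor ((s - t0) / ((Tstar - t0) / N))

open MeasureTheory Set Filter

/-- Elementary three-term decomposition bound used for the HJM drift comparison. -/
lemma key_prod_bound {a a' b c sf Ca Mb d1 d3 d4 : ℝ}
    (ha' : |a'| ≤ Ca) (hd : |a - a'| ≤ d1) (hb : |b| ≤ Mb)
    (h2 : |b - sf| ≤ d3) (h3 : |sf - c| ≤ d4) :
    |a * b - a' * c| ≤ d1 * Mb + Ca * d3 + Ca * d4 := by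
  have hd1 : 0 ≤ d1 := (abs_nonneg _).trans hd
  have hCa : 0 ≤ Ca := (abs_nonneg _).trans ha'
  have e : a * b - a' * c = (a - a') * b + a' * (b - sf) + a' * (sf - c) := by ring
  calc |a * b - a' * c| = |(a - a') * b + a' * (b - sf) + a' * (sf - c)| := by rw [e]
    _ ≤ |(a - a') * b + a' * (b - sf)| + |a' * (sf - c)| := abs_add_le _ _
    _ ≤ |(a - a') * b| + |a' * (b - sf)| + |a' * (sf - c)| :=
        add_le_add_left (abs_add_le _ _) _
    _ = |a - a'| * |b| + |a'| * |b - sf| + |a'| * |sf - c| := by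
        rw [abs_mul, abs_mul, abs_mul]
    _ ≤ d1 * Mb + Ca * d3 + Ca * d4 := by
        refine add_le_add (add_le_add ?_ ?_) ?_
        · exact mul_le_mul hd hb (abs_nonneg _) hd1
        · exact mul_le_mul ha' h2 (abs_nonneg _) hCa
        · exact mul_le_mul ha' h3 (abs_nonneg _) hCa

/-- Bound for a scaled quadrature sum with at most `n+1` terms. -/
lemma quad_sum_abs_le {a b n : ℕ} (hb : b ≤ n) {Δ M : ℝ} (hΔ : 0 ≤ Δ) (hM : 0 ≤ M)
    (F : ℕ → ℝ) (hF : ∀ k ∈ Finset.Icc a b, |F k| ≤ M) :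
    |Δ * ∑ k ∈ Finset.Icc a b, F k| ≤ Δ * (((n : ℝ) + 1) * M) := by
  rw [abs_mul, abs_of_nonneg hΔ]
  refine mul_le_mul_of_nonneg_left ?_ hΔ
  calc |∑ k ∈ Finset.Icc a b, F k| ≤ ∑ k ∈ Finset.Icc a b, |F k| :=
        Finset.abs_sum_le_sum_abs _ _
    _ ≤ (Finset.Icc a b).card • M := Finset.sum_le_card_nsmul _ _ _ hF
    _ = ((Finset.Icc a b).card : ℝ) * M := nsmul_eq_mul _ _
    _ ≤ ((n : ℝ) + 1) * M := by
        refine mul_le_mul_of_nonneg_right ?_ hM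
        have hcard : (Finset.Icc a b).card ≤ n + 1 := by
          rw [Nat.card_Icc]; omega
        exact_mod_cast hcard

/-- Noise-free analogue of the paper's Theorem 4.1: if the quadrature used in the
maturity-discretized HJM system has order `p` along the exact solution, then the
`T`-discretization `f̃ⁱ` converges to `f(·, T_i)` with order `Δ^p`, with a constant
depending only on `C, L, Γ, C₁, d, t* − t0, T* − t0` (not on `Δ` or `N`). -/
theorem T_discretization_order_p
    (t0 tstar Tstar : ℝ) (d : ℕ) (C L Γ C₁ p : ℝ)
    (h1 : t0 < tstar) (h2 : tstar ≤ Tstar) (hd : 1 ≤ d)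
    (hC : 0 < C) (hL : 0 ≤ L) (hΓ : 0 ≤ Γ) (hC₁ : 0 < C₁) (hp : 0 < p) :
    ∃ K > 0,
      ∀ σ : Fin d → ℝ → ℝ → ℝ → ℝ,
        (∀ j, Measurable fun q : ℝ × ℝ × ℝ => σ j q.1 q.2.1 q.2.2) →
        (∀ j t T z, |σ j t T z| ≤ C) →
        (∀ j t T z z', |σ j t T z - σ j t T z'| ≤ L * |z - z'|) →
      ∀ f0 : ℝ → ℝ, ContinuousOn f0 (Set.Icc t0 Tstar) →
      ∀ f : ℝ → ℝ → ℝ,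
        ContinuousOn (fun q : ℝ × ℝ => f q.1 q.2)
          (Set.Icc t0 tstar ×ˢ Set.Icc t0 Tstar) →
        (∀ t ∈ Set.Icc t0 tstar, ∀ T ∈ Set.Icc t0 Tstar,
          f t T = f0 T + ∫ s in t0..t, ∑ j : Fin d,
            σ j s T (f s T) * ∫ u in s..T, σ j s u (f s u)) →
      ∀ N : ℕ, 0 < N →
      ∀ γ : ℕ → ℝ → ℝ, (∀ k, Measurable (γ k)) → (∀ k s, |γ k s| ≤ Γ) →
      ∀ κ : ℝ → ℕ → ℕ, (∀ i, Measurable fun s => κ s i) →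
        (∀ s ∈ Set.Icc t0 tstar, ∀ i ≤ N,
          ellIdx t0 Tstar N s ≤ κ s i ∧ κ s i ≤ N) →
      ∀ ftil : ℕ → ℝ → ℝ,
        (∀ i ≤ N, ContinuousOn (ftil i) (Set.Icc t0 tstar)) →
        -- the maturity-discretized system of integral equations
        (∀ i ≤ N, ∀ t ∈ Set.Icc t0 tstar,
          ftil i t = f0 (Tgrid t0 Tstar N i) + ∫ s in t0..t, ∑ j : Fin d,
            σ j s (Tgrid t0 Tstar N i) (ftil i s) *
              (((Tstar - t0) / N) *
                ∑ k ∈ Finset.Icc (ellIdx t0 Tstar N s) (κ s i),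
                  γ k s * σ j s (Tgrid t0 Tstar N k) (ftil k s))) →
        -- the quadrature has order `p` along the exact solution
        (∀ s ∈ Set.Icc t0 tstar, ∀ i ≤ N, ∀ j : Fin d,
          |((Tstar - t0) / N) *
              ∑ k ∈ Finset.Icc (ellIdx t0 Tstar N s) (κ s i),
                γ k s * σ j s (Tgrid t0 Tstar N k) (f s (Tgrid t0 Tstar N k)) -
            ∫ u in s..(Tgrid t0 Tstar N i), σ j s u (f s u)|
              ≤ C₁ * ((Tstar - t0) / N) ^ p) →
      ∀ t ∈ Set.Icc t0 tstar, ∀ i ≤ N,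
        |ftil i t - f t (Tgrid t0 Tstar N i)| ≤ K * ((Tstar - t0) / N) ^ p := by
  classical
  have hdpos : (0 : ℝ) < d := by exact_mod_cast Nat.lt_of_lt_of_le Nat.zero_lt_one hd
  have hδ : (0 : ℝ) < Tstar - t0 := by linarith
  have htt : (0 : ℝ) < tstar - t0 := by linarith
  set K : ℝ := (d : ℝ) * (C * C₁) * (tstar - t0) *
      Real.exp (((d : ℝ) * (4 * (Tstar - t0) * Γ * L * C) + 1) * (tstar - t0)) with hKdef
  have hKpos : 0 < K := by
    rw [hKdef]
    have := Real.exp_pos (((d : ℝ) * (4 * (Tstar - t0) * Γ * L * C) + 1) * (tstar - t0))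
    have h1' : 0 < (d : ℝ) * (C * C₁) := mul_pos hdpos (mul_pos hC hC₁)
    exact mul_pos (mul_pos h1' htt) this
  refine ⟨K, hKpos, ?_⟩
  intro σ hσm hσb hσL f0 hf0 f hfc hfeq N hN γ hγm hγb κ hκm hκb ftil hftilc hftileq hquad
  have hNpos : (0 : ℝ) < N := by exact_mod_cast hN
  set Δ : ℝ := (Tstar - t0) / N with hΔdef
  set Tk : ℕ → ℝ := Tgrid t0 Tstar N with hTkdef
  set ℓfun : ℝ → ℕ := ellIdx t0 Tstar N with hℓdef
  have hΔpos : 0 < Δ := div_pos hδ hNpos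
  have hΔppos : 0 ≤ Δ ^ p := Real.rpow_nonneg hΔpos.le p
  have hNΔ : (N : ℝ) * Δ = Tstar - t0 := by
    rw [hΔdef]; field_simp
  have hΔle : Δ ≤ Tstar - t0 := by
    rw [hΔdef, div_le_iff₀ hNpos]
    have : (1 : ℝ) ≤ N := by exact_mod_cast hN
    nlinarith
  have hΔN1 : ((N : ℝ) + 1) * Δ ≤ 2 * (Tstar - t0) := by nlinarith
  have hTmem : ∀ k ≤ N, Tk k ∈ Set.Icc t0 Tstar := by
    intro k hk
    rw [hTkdef]
    unfold Tgrid
    constructor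
    · have : (0 : ℝ) ≤ (k : ℝ) * ((Tstar - t0) / N) := by positivity
      linarith
    · have hkN : (k : ℝ) ≤ N := by exact_mod_cast hk
      have h3 : (k : ℝ) * ((Tstar - t0) / N) ≤ (N : ℝ) * ((Tstar - t0) / N) :=
        mul_le_mul_of_nonneg_right hkN (le_of_lt (by rw [← hΔdef]; exact hΔpos))
      have h4 : (N : ℝ) * ((Tstar - t0) / N) = Tstar - t0 := by rw [← hΔdef]; exact hNΔ
      linarith
  have hne : (Finset.range (N + 1)).Nonempty := Finset.nonempty_range_iff.2 (Nat.succ_ne_zero N)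
  set E : ℝ → ℝ := fun s =>
      ((Finset.range (N + 1)).sup' hne (fun k => |ftil k s - f s (Tk k)|) : ℝ) with hEdef
  have heleE : ∀ k ≤ N, ∀ s, |ftil k s - f s (Tk k)| ≤ E s := by
    intro k hk s
    simp only [hEdef]
    exact Finset.le_sup' (fun k => |ftil k s - f s (Tk k)|)
      (Finset.mem_range.2 (Nat.lt_succ_of_le hk))
  have hEnn : ∀ s, 0 ≤ E s := fun s => (abs_nonneg _).trans (heleE 0 (Nat.zero_le N) s)
  have hfTkcont : ∀ k ≤ N, ContinuousOn (fun s => f s (Tk k)) (Set.Icc t0 tstar) := by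
    intro k hk
    have hcm : ContinuousOn (fun s => ((s, Tk k) : ℝ × ℝ)) (Set.Icc t0 tstar) :=
      (continuous_id.prodMk continuous_const).continuousOn
    exact hfc.comp hcm fun s hs => Set.mk_mem_prod hs (hTmem k hk)
  have hEcont : ContinuousOn E (Set.Icc t0 tstar) := by
    rw [hEdef]
    exact ContinuousOn.finset_sup'_apply hne fun k hk =>
      ((hftilc k (Nat.lt_succ_iff.1 (Finset.mem_range.1 hk))).sub
        (hfTkcont k (Nat.lt_succ_iff.1 (Finset.mem_range.1 hk)))).abs
  have hEII : ∀ x ∈ Set.Icc t0 tstar, IntervalIntegrable E volume t0 x := by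
    intro x hx
    apply ContinuousOn.intervalIntegrable
    apply hEcont.mono
    rw [Set.uIcc_of_le hx.1]
    exact Set.Icc_subset_Icc le_rfl hx.2
  -- the quadrature sums and integrals
  set Stil : Fin d → ℕ → ℝ → ℝ := fun j i' s =>
      Δ * ∑ k ∈ Finset.Icc (ℓfun s) (κ s i'), γ k s * σ j s (Tk k) (ftil k s) with hStildef
  set Sf : Fin d → ℕ → ℝ → ℝ := fun j i' s =>
      Δ * ∑ k ∈ Finset.Icc (ℓfun s) (κ s i'), γ k s * σ j s (Tk k) (f s (Tk k)) with hSfdef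
  set Ifun : Fin d → ℕ → ℝ → ℝ := fun j i' s =>
      ∫ u in s..(Tk i'), σ j s u (f s u) with hIdef
  set gfun : ℕ → ℝ → ℝ := fun i' s =>
      ∑ j : Fin d, σ j s (Tk i') (ftil i' s) * Stil j i' s with hgdef
  set hfun : ℕ → ℝ → ℝ := fun i' s =>
      ∑ j : Fin d, σ j s (Tk i') (f s (Tk i')) * Ifun j i' s with hhdef
  -- pointwise bounds
  have hΔ2 : ∀ M : ℝ, 0 ≤ M → Δ * (((N : ℝ) + 1) * M) ≤ 2 * (Tstar - t0) * M := by
    intro M hM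
    have := mul_le_mul_of_nonneg_right hΔN1 hM
    nlinarith
  have hStil_bd : ∀ s ∈ Set.Icc t0 tstar, ∀ i' ≤ N, ∀ j : Fin d,
      |Stil j i' s| ≤ 2 * (Tstar - t0) * (Γ * C) := by
    intro s hs i' hi' j
    simp only [hStildef]
    refine le_trans (quad_sum_abs_le (hκb s hs i' hi').2 hΔpos.le
      (mul_nonneg hΓ hC.le) _ ?_) (hΔ2 _ (mul_nonneg hΓ hC.le))
    intro k _
    rw [abs_mul]
    exact mul_le_mul (hγb k s) (hσb j s (Tk k) (ftil k s)) (abs_nonneg _) hΓ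
  have hSdiff_bd : ∀ s ∈ Set.Icc t0 tstar, ∀ i' ≤ N, ∀ j : Fin d,
      |Stil j i' s - Sf j i' s| ≤ 2 * (Tstar - t0) * (Γ * (L * E s)) := by
    intro s hs i' hi' j
    have hMnn : 0 ≤ Γ * (L * E s) := mul_nonneg hΓ (mul_nonneg hL (hEnn s))
    have hrw : Stil j i' s - Sf j i' s = Δ * ∑ k ∈ Finset.Icc (ℓfun s) (κ s i'),
        (γ k s * σ j s (Tk k) (ftil k s) - γ k s * σ j s (Tk k) (f s (Tk k))) := by
      simp only [hStildef, hSfdef, Finset.sum_sub_distrib, mul_sub]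
    rw [hrw]
    refine le_trans (quad_sum_abs_le (hκb s hs i' hi').2 hΔpos.le hMnn _ ?_) (hΔ2 _ hMnn)
    intro k hk
    have hkN : k ≤ N := le_trans (Finset.mem_Icc.1 hk).2 (hκb s hs i' hi').2
    rw [← mul_sub, abs_mul]
    refine mul_le_mul (hγb k s) ?_ (abs_nonneg _) hΓ
    exact le_trans (hσL j s (Tk k) (ftil k s) (f s (Tk k)))
      (mul_le_mul_of_nonneg_left (heleE k hkN s) hL)
  have hquad' : ∀ s ∈ Set.Icc t0 tstar, ∀ i' ≤ N, ∀ j : Fin d,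
      |Sf j i' s - Ifun j i' s| ≤ C₁ * Δ ^ p := by
    intro s hs i' hi' j
    simp only [hSfdef, hIdef]
    exact hquad s hs i' hi' j
  have hI_bd : ∀ s ∈ Set.Icc t0 tstar, ∀ i' ≤ N, ∀ j : Fin d,
      |Ifun j i' s| ≤ C * (Tstar - t0) := by
    intro s hs i' hi' j
    simp only [hIdef]
    have hb1 := hTmem i' hi'
    have h5 : |∫ u in s..(Tk i'), σ j s u (f s u)| ≤ C * |Tk i' - s| := by
      rw [← Real.norm_eq_abs]
      exact intervalIntegral.norm_integral_le_of_norm_le_const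
        (fun x _ => by rw [Real.norm_eq_abs]; exact hσb j s x (f s x))
    refine h5.trans (mul_le_mul_of_nonneg_left ?_ hC.le)
    rw [abs_le]
    constructor
    · have := hs.2; have := hb1.1; linarith
    · have := hs.1; have := hb1.2; linarith
  -- measurability infrastructure
  set μ₀ : Measure ℝ := volume.restrict (Set.Icc t0 tstar) with hμdef
  set ν₀ : Measure ℝ := volume.restrict (Set.Icc t0 Tstar) with hνdef
  have hftilae : ∀ k ≤ N, AEMeasurable (ftil k) μ₀ := by
    intro k hk
    rw [hμdef]
    exact (hftilc k hk).aemeasurable measurableSet_Icc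
  have hσae : ∀ (j : Fin d) (T : ℝ) (g : ℝ → ℝ), AEMeasurable g μ₀ →
      AEMeasurable (fun s => σ j s T (g s)) μ₀ := by
    intro j T g hg
    have h1' : AEMeasurable (fun s => ((s, (T, g s)) : ℝ × ℝ × ℝ)) μ₀ :=
      aemeasurable_id.prodMk (aemeasurable_const.prodMk hg)
    exact (hσm j).comp_aemeasurable h1'
  have hℓm : Measurable ℓfun := by
    rw [hℓdef]
    unfold ellIdx
    exact ((measurable_id.sub measurable_const).div_const _).nat_floor
  have hStilae : ∀ (j : Fin d), ∀ i' ≤ N, AEMeasurable (Stil j i') μ₀ := by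
    intro j i' hi'
    have hg2 : AEMeasurable (fun s => Δ * ∑ k ∈ Finset.range (N + 1),
        ({s' : ℝ | k ∈ Finset.Icc (ℓfun s') (κ s' i')}.indicator
          (fun s' => γ k s' * σ j s' (Tk k) (ftil k s')) s)) μ₀ := by
      refine AEMeasurable.const_mul ?_ Δ
      refine Finset.aemeasurable_fun_sum _ fun k hk => ?_
      have hkN : k ≤ N := Nat.lt_succ_iff.1 (Finset.mem_range.1 hk)
      have hset : MeasurableSet {s' : ℝ | k ∈ Finset.Icc (ℓfun s') (κ s' i')} := by
        have hseq : {s' : ℝ | k ∈ Finset.Icc (ℓfun s') (κ s' i')}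
            = (ℓfun ⁻¹' {n | n ≤ k}) ∩ ((fun s' => κ s' i') ⁻¹' {n | k ≤ n}) := by
          ext s'; simp [Finset.mem_Icc]
        rw [hseq]
        exact (hℓm ((Set.to_countable _).measurableSet)).inter
          ((hκm i') ((Set.to_countable _).measurableSet))
      exact AEMeasurable.indicator
        (((hγm k).aemeasurable).mul (hσae j (Tk k) (ftil k) (hftilae k hkN))) hset
    refine hg2.congr ?_
    filter_upwards [ae_restrict_mem (measurableSet_Icc : MeasurableSet (Set.Icc t0 tstar))]
      with s hs
    have hκN : κ s i' ≤ N := (hκb s hs i' hi').2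
    simp only [hStildef]
    congr 1
    have h1' : ∀ k ∈ Finset.range (N + 1),
        ({s' : ℝ | k ∈ Finset.Icc (ℓfun s') (κ s' i')}.indicator
          (fun s' => γ k s' * σ j s' (Tk k) (ftil k s')) s)
        = if k ∈ Finset.Icc (ℓfun s) (κ s i') then γ k s * σ j s (Tk k) (ftil k s) else 0 := by
      intro k _
      simp [Set.indicator_apply, Set.mem_setOf_eq]
    rw [Finset.sum_congr rfl h1', Finset.sum_ite_mem]
    congr 1
    refine Finset.inter_eq_right.2 fun k hk => ?_
    simp only [Finset.mem_Icc] at hk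
    exact Finset.mem_range.2 (by omega)
  -- joint measurability of the exact-solution integrand
  have hprod : μ₀.prod ν₀ =
      (volume : Measure (ℝ × ℝ)).restrict (Set.Icc t0 tstar ×ˢ Set.Icc t0 Tstar) := by
    rw [hμdef, hνdef, Measure.prod_restrict, ← Measure.volume_eq_prod]
  have hfae2 : AEMeasurable (fun q : ℝ × ℝ => f q.1 q.2) (μ₀.prod ν₀) := by
    rw [hprod]
    exact hfc.aemeasurable (measurableSet_Icc.prod measurableSet_Icc)
  have hFae : ∀ j : Fin d,
      AEMeasurable (fun q : ℝ × ℝ => σ j q.1 q.2 (f q.1 q.2)) (μ₀.prod ν₀) := by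
    intro j
    have h1' : AEMeasurable (fun q : ℝ × ℝ => (q.1, (q.2, f q.1 q.2))) (μ₀.prod ν₀) :=
      measurable_fst.aemeasurable.prodMk (measurable_snd.aemeasurable.prodMk hfae2)
    exact (hσm j).comp_aemeasurable h1'
  have hFsec : ∀ j : Fin d,
      ∀ᵐ s ∂μ₀, AEStronglyMeasurable (fun u => σ j s u (f s u)) ν₀ :=
    fun j => ((hFae j).aestronglyMeasurable).prodMk_left
  have hJmeas : ∀ (j : Fin d), ∀ i' ≤ N, AEStronglyMeasurable (Ifun j i') μ₀ := by
    intro j i' hi'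
    have hFasm : AEStronglyMeasurable (fun q : ℝ × ℝ => σ j q.1 q.2 (f q.1 q.2))
        (μ₀.prod ν₀) := (hFae j).aestronglyMeasurable
    have hG1 : AEStronglyMeasurable
        ({q : ℝ × ℝ | q.2 ∈ Set.Ioc t0 (Tk i')}.indicator
          (fun q : ℝ × ℝ => σ j q.1 q.2 (f q.1 q.2))) (μ₀.prod ν₀) :=
      hFasm.indicator (measurable_snd measurableSet_Ioc)
    have hG2 : AEStronglyMeasurable
        ({q : ℝ × ℝ | t0 < q.2 ∧ q.2 ≤ q.1}.indicator
          (fun q : ℝ × ℝ => σ j q.1 q.2 (f q.1 q.2))) (μ₀.prod ν₀) :=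
      hFasm.indicator ((measurableSet_lt measurable_const measurable_snd).inter
        (measurableSet_le measurable_snd measurable_fst))
    have hJ1 := hG1.integral_prod_right'
    have hJ2 := hG2.integral_prod_right'
    refine (hJ1.sub hJ2).congr ?_
    filter_upwards [hFsec j,
      ae_restrict_mem (measurableSet_Icc : MeasurableSet (Set.Icc t0 tstar))] with s hsm hs
    have hTi := hTmem i' hi'
    have hsT : s ∈ Set.Icc t0 Tstar := ⟨hs.1, hs.2.trans h2⟩
    -- interval integrability of the section on subintervals of [t0, T*]
    have hFsint : ∀ a b : ℝ, a ∈ Set.Icc t0 Tstar → b ∈ Set.Icc t0 Tstar →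
        IntervalIntegrable (fun u => σ j s u (f s u)) volume a b := by
      intro a b ha hb
      apply MeasureTheory.IntegrableOn.intervalIntegrable
      have hsub : Set.uIcc a b ⊆ Set.Icc t0 Tstar := Set.uIcc_subset_Icc ha hb
      have hsm' : AEStronglyMeasurable (fun u => σ j s u (f s u))
          (volume.restrict (Set.uIcc a b)) := by
        refine hsm.mono_measure ?_
        rw [hνdef]
        exact Measure.restrict_mono hsub le_rfl
      refine Integrable.mono' (g := fun _ => C)
        (integrableOn_const isCompact_uIcc.measure_lt_top.ne) hsm' ?_
      refine Eventually.of_forall fun u => ?_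
      rw [Real.norm_eq_abs]
      exact hσb j s u (f s u)
    have hint1 : IntervalIntegrable (fun u => σ j s u (f s u)) volume t0 s :=
      hFsint t0 s ⟨le_rfl, by linarith⟩ hsT
    have hint2 : IntervalIntegrable (fun u => σ j s u (f s u)) volume s (Tk i') :=
      hFsint s (Tk i') hsT hTi
    have e1 := intervalIntegral.integral_add_adjacent_intervals hint1 hint2
    -- identify the two product-integrals with interval integrals
    have eJ1 : (∫ u, ({q : ℝ × ℝ | q.2 ∈ Set.Ioc t0 (Tk i')}.indicator
          (fun q : ℝ × ℝ => σ j q.1 q.2 (f q.1 q.2))) (s, u) ∂ν₀)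
        = ∫ u in t0..(Tk i'), σ j s u (f s u) := by
      have hfun1 : (fun u => ({q : ℝ × ℝ | q.2 ∈ Set.Ioc t0 (Tk i')}.indicator
            (fun q : ℝ × ℝ => σ j q.1 q.2 (f q.1 q.2))) (s, u))
          = (Set.Ioc t0 (Tk i')).indicator (fun u => σ j s u (f s u)) := by
        ext u
        simp only [Set.indicator_apply, Set.mem_setOf_eq, Set.mem_Ioc]
      rw [hfun1, integral_indicator measurableSet_Ioc, hνdef,
        Measure.restrict_restrict measurableSet_Ioc,
        Set.inter_eq_self_of_subset_left
          (Set.Ioc_subset_Icc_self.trans (Set.Icc_subset_Icc le_rfl hTi.2)),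
        ← intervalIntegral.integral_of_le hTi.1]
    have eJ2 : (∫ u, ({q : ℝ × ℝ | t0 < q.2 ∧ q.2 ≤ q.1}.indicator
          (fun q : ℝ × ℝ => σ j q.1 q.2 (f q.1 q.2))) (s, u) ∂ν₀)
        = ∫ u in t0..s, σ j s u (f s u) := by
      have hfun2 : (fun u => ({q : ℝ × ℝ | t0 < q.2 ∧ q.2 ≤ q.1}.indicator
            (fun q : ℝ × ℝ => σ j q.1 q.2 (f q.1 q.2))) (s, u))
          = (Set.Ioc t0 s).indicator (fun u => σ j s u (f s u)) := by
        ext u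
        simp only [Set.indicator_apply, Set.mem_setOf_eq, Set.mem_Ioc]
      rw [hfun2, integral_indicator measurableSet_Ioc, hνdef,
        Measure.restrict_restrict measurableSet_Ioc,
        Set.inter_eq_self_of_subset_left
          (Set.Ioc_subset_Icc_self.trans (Set.Icc_subset_Icc le_rfl hsT.2)),
        ← intervalIntegral.integral_of_le hsT.1]
    simp only [Pi.sub_apply]
    rw [eJ1, eJ2]
    simp only [hIdef]
    linarith [e1]
  -- integrability of the two drift integrands
  have hbddInt : ∀ (g : ℝ → ℝ) (M : ℝ), AEStronglyMeasurable g μ₀ →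
      (∀ s ∈ Set.Icc t0 tstar, |g s| ≤ M) →
      ∀ x ∈ Set.Icc t0 tstar, IntervalIntegrable g volume t0 x := by
    intro g M hm hb x hx
    have hInt : IntegrableOn g (Set.Icc t0 tstar) volume := by
      refine Integrable.mono' (g := fun _ => M)
        (integrableOn_const measure_Icc_lt_top.ne) hm ?_
      filter_upwards [ae_restrict_mem (measurableSet_Icc : MeasurableSet (Set.Icc t0 tstar))]
        with s hs
      rw [Real.norm_eq_abs]
      exact hb s hs
    apply MeasureTheory.IntegrableOn.intervalIntegrable
    apply hInt.mono_set
    rw [Set.uIcc_of_le hx.1]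
    exact Set.Icc_subset_Icc le_rfl hx.2
  have hfTkae : ∀ k ≤ N, AEMeasurable (fun s => f s (Tk k)) μ₀ := by
    intro k hk
    rw [hμdef]
    exact (hfTkcont k hk).aemeasurable measurableSet_Icc
  have hgaesm : ∀ i' ≤ N, AEStronglyMeasurable (gfun i') μ₀ := by
    intro i' hi'
    simp only [hgdef]
    refine (Finset.aemeasurable_fun_sum _ fun j _ => ?_).aestronglyMeasurable
    exact (hσae j (Tk i') (ftil i') (hftilae i' hi')).mul (hStilae j i' hi')
  have hhaesm : ∀ i' ≤ N, AEStronglyMeasurable (hfun i') μ₀ := by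
    intro i' hi'
    simp only [hhdef]
    refine (Finset.aemeasurable_fun_sum _ fun j _ => ?_).aestronglyMeasurable
    exact (hσae j (Tk i') _ (hfTkae i' hi')).mul ((hJmeas j i' hi').aemeasurable)
  have hgbd : ∀ i' ≤ N, ∀ s ∈ Set.Icc t0 tstar,
      |gfun i' s| ≤ (d : ℝ) * (C * (2 * (Tstar - t0) * (Γ * C))) := by
    intro i' hi' s hs
    simp only [hgdef]
    calc |∑ j : Fin d, σ j s (Tk i') (ftil i' s) * Stil j i' s|
        ≤ ∑ j : Fin d, |σ j s (Tk i') (ftil i' s) * Stil j i' s| :=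
          Finset.abs_sum_le_sum_abs _ _
      _ ≤ (Finset.univ : Finset (Fin d)).card • (C * (2 * (Tstar - t0) * (Γ * C))) := by
          refine Finset.sum_le_card_nsmul _ _ _ fun j _ => ?_
          rw [abs_mul]
          exact mul_le_mul (hσb j s (Tk i') (ftil i' s)) (hStil_bd s hs i' hi' j)
            (abs_nonneg _) hC.le
      _ = (d : ℝ) * (C * (2 * (Tstar - t0) * (Γ * C))) := by
          simp [nsmul_eq_mul]
  have hhbd : ∀ i' ≤ N, ∀ s ∈ Set.Icc t0 tstar,
      |hfun i' s| ≤ (d : ℝ) * (C * (C * (Tstar - t0))) := by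
    intro i' hi' s hs
    simp only [hhdef]
    calc |∑ j : Fin d, σ j s (Tk i') (f s (Tk i')) * Ifun j i' s|
        ≤ ∑ j : Fin d, |σ j s (Tk i') (f s (Tk i')) * Ifun j i' s| :=
          Finset.abs_sum_le_sum_abs _ _
      _ ≤ (Finset.univ : Finset (Fin d)).card • (C * (C * (Tstar - t0))) := by
          refine Finset.sum_le_card_nsmul _ _ _ fun j _ => ?_
          rw [abs_mul]
          exact mul_le_mul (hσb j s (Tk i') (f s (Tk i'))) (hI_bd s hs i' hi' j)
            (abs_nonneg _) hC.le
      _ = (d : ℝ) * (C * (C * (Tstar - t0))) := by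
          simp [nsmul_eq_mul]
  -- the key integral inequality
  set A : ℝ := (d : ℝ) * (4 * (Tstar - t0) * Γ * L * C) with hAdef
  set B : ℝ := (d : ℝ) * (C * C₁) with hBdef
  have hA0 : 0 ≤ A := by
    rw [hAdef]
    have h4 : (0 : ℝ) ≤ 4 * (Tstar - t0) := by linarith
    exact mul_nonneg (Nat.cast_nonneg d)
      (mul_nonneg (mul_nonneg (mul_nonneg h4 hΓ) hL) hC.le)
  have hB0 : 0 ≤ B := by
    rw [hBdef]
    exact mul_nonneg (Nat.cast_nonneg d) (mul_nonneg hC.le hC₁.le)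
  have hKey : ∀ t' ∈ Set.Icc t0 tstar, ∀ i' ≤ N,
      |ftil i' t' - f t' (Tk i')| ≤
        A * (∫ s in t0..t', E s) + B * Δ ^ p * (tstar - t0) := by
    intro t' ht' i' hi'
    have hgII : IntervalIntegrable (gfun i') volume t0 t' :=
      hbddInt _ _ (hgaesm i' hi') (hgbd i' hi') t' ht'
    have hhII : IntervalIntegrable (hfun i') volume t0 t' :=
      hbddInt _ _ (hhaesm i' hi') (hhbd i' hi') t' ht'
    have hABint : IntervalIntegrable (fun s => A * E s + B * Δ ^ p) volume t0 t' :=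
      ((hEII t' ht').const_mul A).add intervalIntegrable_const
    have hptw : ∀ s ∈ Set.Icc t0 t', |gfun i' s - hfun i' s| ≤ A * E s + B * Δ ^ p := by
      intro s hs'
      have hs : s ∈ Set.Icc t0 tstar := ⟨hs'.1, hs'.2.trans ht'.2⟩
      simp only [hgdef, hhdef]
      rw [← Finset.sum_sub_distrib]
      have hper : ∀ j : Fin d,
          |σ j s (Tk i') (ftil i' s) * Stil j i' s -
            σ j s (Tk i') (f s (Tk i')) * Ifun j i' s|
          ≤ 4 * (Tstar - t0) * Γ * L * C * E s + C * (C₁ * Δ ^ p) := by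
        intro j
        have hlip : |σ j s (Tk i') (ftil i' s) - σ j s (Tk i') (f s (Tk i'))| ≤ L * E s :=
          le_trans (hσL j s (Tk i') (ftil i' s) (f s (Tk i')))
            (mul_le_mul_of_nonneg_left (heleE i' hi' s) hL)
        have h := key_prod_bound (hσb j s (Tk i') (f s (Tk i'))) hlip
          (hStil_bd s hs i' hi' j) (hSdiff_bd s hs i' hi' j) (hquad' s hs i' hi' j)
        refine h.trans (le_of_eq ?_)
        ring
      calc |∑ j : Fin d, (σ j s (Tk i') (ftil i' s) * Stil j i' s -
              σ j s (Tk i') (f s (Tk i')) * Ifun j i' s)|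
          ≤ ∑ j : Fin d, |σ j s (Tk i') (ftil i' s) * Stil j i' s -
              σ j s (Tk i') (f s (Tk i')) * Ifun j i' s| := Finset.abs_sum_le_sum_abs _ _
        _ ≤ (Finset.univ : Finset (Fin d)).card •
              (4 * (Tstar - t0) * Γ * L * C * E s + C * (C₁ * Δ ^ p)) :=
            Finset.sum_le_card_nsmul _ _ _ fun j _ => hper j
        _ = (d : ℝ) * (4 * (Tstar - t0) * Γ * L * C * E s + C * (C₁ * Δ ^ p)) := by
            simp only [nsmul_eq_mul, Finset.card_univ, Fintype.card_fin]
        _ = A * E s + B * Δ ^ p := by rw [hAdef, hBdef]; ring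
    have heq : ftil i' t' - f t' (Tk i') =
        (∫ s in t0..t', gfun i' s) - ∫ s in t0..t', hfun i' s := by
      rw [hftileq i' hi' t' ht', hfeq t' ht' (Tk i') (hTmem i' hi')]
      simp only [hgdef, hhdef, hStildef, hIdef]
      ring
    calc |ftil i' t' - f t' (Tk i')|
        = |∫ s in t0..t', (gfun i' s - hfun i' s)| := by
          rw [heq, intervalIntegral.integral_sub hgII hhII]
      _ ≤ ∫ s in t0..t', |gfun i' s - hfun i' s| :=
          intervalIntegral.abs_integral_le_integral_abs ht'.1
      _ ≤ ∫ s in t0..t', (A * E s + B * Δ ^ p) :=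
          intervalIntegral.integral_mono_on ht'.1 ((hgII.sub hhII).abs) hABint hptw
      _ = A * (∫ s in t0..t', E s) + B * Δ ^ p * (t' - t0) := by
          rw [intervalIntegral.integral_add ((hEII t' ht').const_mul A)
            intervalIntegrable_const, intervalIntegral.integral_const_mul,
            intervalIntegral.integral_const, smul_eq_mul]
          ring
      _ ≤ A * (∫ s in t0..t', E s) + B * Δ ^ p * (tstar - t0) := by
          have hle : t' - t0 ≤ tstar - t0 := by linarith [ht'.2]
          have h9 : B * Δ ^ p * (t' - t0) ≤ B * Δ ^ p * (tstar - t0) :=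
            mul_le_mul_of_nonneg_left hle (mul_nonneg hB0 hΔppos)
          linarith
  -- Grönwall argument
  intro t ht i hiN
  set ε : ℝ := B * Δ ^ p * (tstar - t0) with hεdef
  have hεnn : 0 ≤ ε := by
    rw [hεdef]
    exact mul_nonneg (mul_nonneg hB0 hΔppos) htt.le
  set A' : ℝ := A + 1 with hA'def
  have hA'pos : 0 < A' := by rw [hA'def]; linarith
  set G : ℝ → ℝ := fun t' => ∫ s in t0..t', E s with hGdef
  have hEb : ∀ t' ∈ Set.Icc t0 tstar, E t' ≤ A * G t' + ε := by
    intro t' ht'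
    have hsup : E t' ≤ A * (∫ s in t0..t', E s) + ε := by
      simp only [hEdef]
      refine Finset.sup'_le _ _ fun k hk => ?_
      have hkN : k ≤ N := Nat.lt_succ_iff.1 (Finset.mem_range.1 hk)
      have := hKey t' ht' k hkN
      rw [hεdef]
      exact this
    simpa only [hGdef] using hsup
  have hGnn : ∀ x ∈ Set.Icc t0 tstar, 0 ≤ G x := by
    intro x hx
    simp only [hGdef]
    exact intervalIntegral.integral_nonneg hx.1 fun u _ => hEnn u
  have hGcont : ContinuousOn G (Set.Icc t0 tstar) := by
    have h_int : IntegrableOn E (Set.uIcc t0 tstar) volume := by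
      rw [Set.uIcc_of_le h1.le]
      exact hEcont.integrableOn_Icc
    have := intervalIntegral.continuousOn_primitive_interval h_int
    rw [Set.uIcc_of_le h1.le] at this
    exact this
  have hG' : ∀ x ∈ Set.Ico t0 tstar, HasDerivWithinAt G (E x) (Set.Ici x) x := by
    intro x hx
    have hxI : x ∈ Set.Icc t0 tstar := ⟨hx.1, hx.2.le⟩
    have hmem : Set.Icc t0 tstar ∈ nhdsWithin x (Set.Ici x) := Icc_mem_nhdsGE_of_mem hx
    have hmem' : Set.Icc t0 tstar ∈ nhdsWithin x (Set.Ioi x) :=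
      nhdsWithin_mono x Set.Ioi_subset_Ici_self hmem
    exact intervalIntegral.integral_hasDerivWithinAt_right (s := Set.Ici x) (t := Set.Ioi x)
      (hEII x hxI)
      ⟨Set.Icc t0 tstar, hmem', hEcont.aestronglyMeasurable measurableSet_Icc⟩
      (((hEcont x hxI).mono_of_mem_nhdsWithin hmem).mono Set.Ioi_subset_Ici_self)
  have hG0 : ‖G t0‖ ≤ 0 := by
    simp only [hGdef, intervalIntegral.integral_same, norm_zero, le_refl]
  have hbd : ∀ x ∈ Set.Ico t0 tstar, ‖E x‖ ≤ A' * ‖G x‖ + ε := by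
    intro x hx
    have hxI : x ∈ Set.Icc t0 tstar := ⟨hx.1, hx.2.le⟩
    rw [Real.norm_eq_abs, Real.norm_eq_abs, abs_of_nonneg (hEnn x),
      abs_of_nonneg (hGnn x hxI)]
    have h9 : A' * G x = A * G x + G x := by rw [hA'def]; ring
    have := hEb x hxI
    have := hGnn x hxI
    linarith
  have hgron := norm_le_gronwallBound_of_norm_deriv_right_le hGcont hG' hG0 hbd t ht
  rw [gronwallBound_of_K_ne_0 (ne_of_gt hA'pos)] at hgron
  beta_reduce at hgron
  have hGt : ‖G t‖ = G t := by
    rw [Real.norm_eq_abs, abs_of_nonneg (hGnn t ht)]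
  rw [hGt] at hgron
  have hEt : E t ≤ A' * G t + ε := by
    have h9 : A' * G t = A * G t + G t := by rw [hA'def]; ring
    have := hEb t ht
    have := hGnn t ht
    linarith
  have hfin1 : E t ≤ ε * Real.exp (A' * (t - t0)) := by
    have h9 : A' * (0 * Real.exp (A' * (t - t0)) +
        ε / A' * (Real.exp (A' * (t - t0)) - 1)) + ε = ε * Real.exp (A' * (t - t0)) := by
      field_simp
      ring
    have h10 : A' * G t ≤ A' * (0 * Real.exp (A' * (t - t0)) +
        ε / A' * (Real.exp (A' * (t - t0)) - 1)) :=
      mul_le_mul_of_nonneg_left hgron hA'pos.le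
    exact hEt.trans ((add_le_add_left h10 ε).trans_eq h9)
  have hfin2 : ε * Real.exp (A' * (t - t0)) ≤ ε * Real.exp (A' * (tstar - t0)) := by
    refine mul_le_mul_of_nonneg_left ?_ hεnn
    rw [Real.exp_le_exp]
    exact mul_le_mul_of_nonneg_left (by linarith [ht.2]) hA'pos.le
  have hfin3 : ε * Real.exp (A' * (tstar - t0)) = K * Δ ^ p := by
    rw [hεdef, hA'def, hAdef, hBdef, hKdef]
    ring
  calc |ftil i t - f t (Tk i)| ≤ E t := heleE i hiN t
    _ ≤ ε * Real.exp (A' * (t - t0)) := hfin1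
    _ ≤ ε * Real.exp (A' * (tstar - t0)) := hfin2
    _ = K * Δ ^ p := hfin3
end
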